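/- arXiv:1110.6779 — 3 statements merged into one kernel-verified Lean document; each statement's English description precedes it below -/
import Mathlib

section
/- For all n ≥ 2 and k ≥ 1, the number R(n,k) of permutations of {1,...,n} with exactly k alternating runs satisfies the recurrence R(n,k) = k·R(n-1,k) + 2·R(n-1,k-1) + (n-k)·R(n-1,k-2), with initial values R(1,0)=1 and R(1,k)=0 for k ≥ 1. -/
open Polynomial Finset

/-- Derivative polynomials for tangent: `P 0 = X`, `P (n+1) = (1+X^2) * (P n)'`. -/
noncomputable def P : ℕ → Polynomial ℝ
  | 0 => Polynomial.X
  | n + 1 => (1 + Polynomial.X ^ 2) * (P n).derivative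

/-- The values of a permutation of `Fin n`, as a function `ℕ → ℕ` (junk value `0` off-range). -/
def permVal {n : ℕ} (π : Equiv.Perm (Fin n)) : ℕ → ℕ :=
  fun j => if h : j < n then (π ⟨j, h⟩ : ℕ) else 0

/-- The number of alternating runs of a permutation of `{1,…,n}` (0-indexed positions):
one more than the number of interior positions where the permutation changes direction.
By convention this is `0` when `n ≤ 1`. -/
def runs (n : ℕ) (π : Equiv.Perm (Fin n)) : ℕ :=
  if n ≤ 1 then 0 else
    1 + ((Finset.Ico 1 (n - 1)).filter (fun i =>
      (permVal π (i - 1) < permVal π i ∧ permVal π (i + 1) < permVal π i) ∨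
      (permVal π i < permVal π (i - 1) ∧ permVal π i < permVal π (i + 1)))).card

/-- `R n k`: the number of permutations of `{1,…,n}` with exactly `k` alternating runs. -/
def R (n k : ℕ) : ℕ :=
  (Finset.univ.filter (fun π : Equiv.Perm (Fin n) => runs n π = k)).card

/-- The generating polynomial `R_n(x) = ∑_k R(n,k) x^k`. -/
noncomputable def Rpoly (n : ℕ) : Polynomial ℝ :=
  ∑ k ∈ Finset.range n, Polynomial.C ((R n k : ℝ)) * Polynomial.X ^ k

/-- Stirling numbers of the second kind. -/
def stirling2 : ℕ → ℕ → ℕ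
  | 0, 0 => 1
  | 0, _ + 1 => 0
  | _ + 1, 0 => 0
  | n + 1, k + 1 => (k + 1) * stirling2 n (k + 1) + stirling2 n k

/-- The number of descents of a permutation of `Fin n`. -/
def des (n : ℕ) (π : Equiv.Perm (Fin n)) : ℕ :=
  ((Finset.range (n - 1)).filter (fun i => permVal π (i + 1) < permVal π i)).card

/-- `R` indexed by an integer number of runs (zero for negative indices). -/
def Rk (n : ℕ) (k : ℤ) : ℤ :=
  if 0 ≤ k then (R n k.toNat : ℤ) else 0

/-! ### Auxiliary machinery -/

/-- sign sequence of a permutation -/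
def sgn {n : ℕ} (π : Equiv.Perm (Fin n)) (i : ℕ) : Bool :=
  decide (permVal π i < permVal π (i + 1))

lemma permVal_lt {n : ℕ} (π : Equiv.Perm (Fin n)) {j : ℕ} (hj : j < n) :
    permVal π j < n := by
  simp only [permVal, dif_pos hj]
  exact (π ⟨j, hj⟩).isLt

lemma permVal_injOn {n : ℕ} (π : Equiv.Perm (Fin n)) {i j : ℕ} (hi : i < n) (hj : j < n)
    (h : permVal π i = permVal π j) : i = j := by
  simp only [permVal, dif_pos hi, dif_pos hj] at h
  have := π.injective (Fin.val_injective h)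
  simpa using congrArg Fin.val this

lemma runs_eq_alt {n : ℕ} (hn : 2 ≤ n) (π : Equiv.Perm (Fin n)) :
    runs n π = 1 + ((Finset.Ico 1 (n - 1)).filter
      (fun i => sgn π (i - 1) ≠ sgn π i)).card := by
  rw [runs, if_neg (by omega)]
  congr 1
  apply congrArg
  apply Finset.filter_congr
  intro i hi
  simp only [Finset.mem_Ico] at hi
  have h1 : i - 1 < n := by omega
  have h2 : i < n := by omega
  have h3 : i + 1 < n := by omega
  have e1 : i - 1 + 1 = i := by omega
  have hab : permVal π (i-1) ≠ permVal π i := fun h => by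
    have := permVal_injOn π h1 h2 h; omega
  have hbc : permVal π i ≠ permVal π (i+1) := fun h => by
    have := permVal_injOn π h2 h3 h; omega
  simp only [sgn, e1, ne_eq, decide_eq_decide]
  constructor
  · rintro (⟨h, h'⟩ | ⟨h, h'⟩) <;> omega
  · intro h
    rcases lt_or_gt_of_ne hab with h' | h' <;> rcases lt_or_gt_of_ne hbc with h'' | h'' <;>
      first | omega | (exfalso; omega) | (left; omega) | (right; omega)

section Insert

variable {m : ℕ} (σ : Equiv.Perm (Fin m)) (p : Fin (m + 1))

def insFun : Fin (m + 1) → Fin (m + 1) :=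
  p.insertNth (Fin.last m) (fun i => (σ i).castSucc)

lemma insFun_inj : Function.Injective (insFun σ p) := by
  intro a b hab
  rcases eq_or_ne a p with rfl | ha
  · rcases eq_or_ne b a with rfl | hb
    · rfl
    · obtain ⟨j, rfl⟩ := Fin.exists_succAbove_eq hb
      rw [insFun, Fin.insertNth_apply_same, Fin.insertNth_apply_succAbove] at hab
      exact absurd hab.symm (Fin.castSucc_lt_last (σ j)).ne
  · obtain ⟨i, rfl⟩ := Fin.exists_succAbove_eq ha
    rcases eq_or_ne b p with rfl | hb
    · rw [insFun, Fin.insertNth_apply_same, Fin.insertNth_apply_succAbove] at hab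
      exact absurd hab (Fin.castSucc_lt_last (σ i)).ne
    · obtain ⟨j, rfl⟩ := Fin.exists_succAbove_eq hb
      rw [insFun, Fin.insertNth_apply_succAbove, Fin.insertNth_apply_succAbove] at hab
      have := σ.injective (Fin.castSucc_injective _ hab)
      rw [this]

noncomputable def insPerm : Equiv.Perm (Fin (m + 1)) :=
  Equiv.ofBijective (insFun σ p) (Finite.injective_iff_bijective.mp (insFun_inj σ p))

lemma insPerm_apply (j : Fin (m + 1)) : insPerm σ p j = insFun σ p j := rfl

lemma pv_ins_lt {j : ℕ} (hj : j < (p : ℕ)) :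
    permVal (insPerm σ p) j = permVal σ j := by
  have hjm : j < m := by have := p.isLt; omega
  have hjm1 : j < m + 1 := by omega
  have : (⟨j, hjm1⟩ : Fin (m+1)) = p.succAbove ⟨j, hjm⟩ := by
    rw [Fin.succAbove_of_castSucc_lt]
    · rfl
    · simpa [Fin.lt_def] using hj
  simp only [permVal, dif_pos hjm1, dif_pos hjm]
  rw [this, insPerm_apply, insFun, Fin.insertNth_apply_succAbove]
  rfl

lemma pv_ins_eq : permVal (insPerm σ p) p = m := by
  have h : (p : ℕ) < m + 1 := p.isLt
  simp only [permVal, dif_pos h]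
  have : (⟨(p : ℕ), h⟩ : Fin (m+1)) = p := rfl
  rw [this, insPerm_apply, insFun, Fin.insertNth_apply_same]
  rfl

lemma pv_ins_gt {j : ℕ} (hj : (p : ℕ) < j) (hjm : j ≤ m) :
    permVal (insPerm σ p) j = permVal σ (j - 1) := by
  have hjm1 : j < m + 1 := by omega
  have hj1m : j - 1 < m := by omega
  have : (⟨j, hjm1⟩ : Fin (m+1)) = p.succAbove ⟨j - 1, hj1m⟩ := by
    rw [Fin.succAbove_of_le_castSucc]
    · simp [Fin.ext_iff]; omega
    · simp [Fin.le_def]; omega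
  simp only [permVal, dif_pos hjm1, dif_pos hj1m]
  rw [this, insPerm_apply, insFun, Fin.insertNth_apply_succAbove]
  rfl

lemma pv_lt_m {j : ℕ} (hj : j < m) : permVal σ j < m := permVal_lt σ hj

/-- sign lemmas -/
lemma sgn_ins_lt {i : ℕ} (hi : i + 1 < (p : ℕ)) :
    sgn (insPerm σ p) i = sgn σ i := by
  rw [sgn, sgn, pv_ins_lt σ p (by omega), pv_ins_lt σ p hi]

lemma sgn_ins_peak₁ (hp : 1 ≤ (p : ℕ)) : sgn (insPerm σ p) ((p : ℕ) - 1) = true := by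
  have e : (p : ℕ) - 1 + 1 = p := by omega
  rw [sgn, e, pv_ins_eq, pv_ins_lt σ p (by omega)]
  simp [pv_lt_m σ (show (p:ℕ) - 1 < m by have := p.isLt; omega)]

lemma sgn_ins_peak₂ (hp : (p : ℕ) + 1 ≤ m) : sgn (insPerm σ p) p = false := by
  rw [sgn, pv_ins_eq, pv_ins_gt σ p (by omega) (by omega)]
  simp only [Nat.add_sub_cancel, decide_eq_false_iff_not, not_lt]
  exact le_of_lt (pv_lt_m σ (by omega))

lemma sgn_ins_gt {i : ℕ} (hi : (p : ℕ) < i) (him : i + 1 ≤ m) :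
    sgn (insPerm σ p) i = sgn σ (i - 1) := by
  rw [sgn, sgn, pv_ins_gt σ p hi (by omega), pv_ins_gt σ p (by omega) (by omega)]
  have e : i + 1 - 1 = i - 1 + 1 := by omega
  rw [e]

end Insert

lemma sum_shift (f : ℕ → ℕ) (a b : ℕ) :
    ∑ i ∈ Finset.Ico (a+1) (b+1), f i = ∑ i ∈ Finset.Ico a b, f (i+1) := by
  rw [Finset.sum_Ico_eq_sum_range, Finset.sum_Ico_eq_sum_range]
  simp only [Nat.add_sub_add_right]
  apply Finset.sum_congr rfl
  intro i _
  congr 1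
  omega

/-! ### The delta computation -/

section Delta

variable {m : ℕ} (σ : Equiv.Perm (Fin m))

/-- The change in number of runs when inserting the max at slot `p`. -/
def D (s : ℕ → Bool) (m p : ℕ) : ℕ :=
  if p = 0 then (if s 0 then 1 else 0)
  else if p = m then (if s (m - 2) then 0 else 1)
  else if p + 1 = m ∧ p = 1 then 1
  else if p = 1 then (if s 0 then (if s 1 then 2 else 0) else 1)
  else if p + 1 = m then (if s (m - 2) then 1 else (if s (m - 3) then 0 else 2))
  else if s (p - 1) then (if s p then 2 else 0) else (if s (p - 2) then 0 else 2)

lemma card_alt (h : ℕ → Bool) (b c : ℕ) (hc : c = b + 1) :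
    ∑ i ∈ Finset.Ico 1 c, (if ¬ h (i - 1) = h i then (1:ℕ) else 0)
      = ∑ i ∈ Finset.range b, (if ¬ h i = h (i + 1) then (1:ℕ) else 0) := by
  subst hc
  rw [← Nat.Ico_zero_eq_range]
  rw [sum_shift (fun i => if ¬ h (i-1) = h i then (1:ℕ) else 0) 0 b]
  apply Finset.sum_congr rfl
  intro i _
  simp

lemma sum_Ico_one' (f : ℕ → ℕ) (a b : ℕ) (h : b = a + 1) :
    ∑ i ∈ Finset.Ico a b, f i = f a := by
  subst h
  rw [Finset.sum_Ico_eq_sum_range]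
  simp

lemma sum_Ico_two' (f : ℕ → ℕ) (a b : ℕ) (h : b = a + 2) :
    ∑ i ∈ Finset.Ico a b, f i = f a + f (a+1) := by
  subst h
  rw [Finset.sum_Ico_eq_sum_range]
  simp [Finset.sum_range_succ]

lemma sum_Ico_three' (f : ℕ → ℕ) (a b : ℕ) (h : b = a + 3) :
    ∑ i ∈ Finset.Ico a b, f i = f a + f (a+1) + f (a+2) := by
  subst h
  rw [Finset.sum_Ico_eq_sum_range]
  simp [Finset.sum_range_succ, add_assoc]

lemma sum_Ico_two (f : ℕ → ℕ) (a : ℕ) : ∑ i ∈ Finset.Ico a (a+2), f i = f a + f (a+1) := by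
  rw [Finset.sum_Ico_eq_sum_range]
  simp [Finset.sum_range_succ]

lemma sum_Ico_three (f : ℕ → ℕ) (a : ℕ) :
    ∑ i ∈ Finset.Ico a (a+3), f i = f a + f (a+1) + f (a+2) := by
  rw [Finset.sum_Ico_eq_sum_range]
  simp [Finset.sum_range_succ, add_assoc]

lemma runs_ins {m : ℕ} (σ : Equiv.Perm (Fin m)) (hm : 2 ≤ m) (p : Fin (m + 1)) :
    runs (m + 1) (insPerm σ p) = runs m σ + D (sgn σ) m p := by
  have hqm : (p : ℕ) ≤ m := by omega
  rw [runs_eq_alt (by omega), runs_eq_alt (by omega), Finset.card_filter, Finset.card_filter]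
  simp only [Nat.add_sub_cancel, ne_eq]
  rw [card_alt _ (m-1) m (by omega), card_alt _ (m-2) (m-1) (by omega)]
  simp only [Finset.range_eq_Ico]
  set t := sgn (insPerm σ p) with ht
  set s := sgn σ with hs
  have tval : ∀ i j : ℕ, i = j → t i = t j := fun _ _ h => by rw [h]
  have sval : ∀ i j : ℕ, i = j → s i = s j := fun _ _ h => by rw [h]
  set F : ℕ → ℕ := fun i => if ¬ t i = t (i+1) then 1 else 0 with hF
  set G : ℕ → ℕ := fun i => if ¬ s i = s (i+1) then 1 else 0 with hG
  have FG_lt : ∀ i, i + 2 < (p:ℕ) → F i = G i := by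
    intro i hi
    simp only [hF, hG, ht, hs]
    rw [sgn_ins_lt σ p (by omega), sgn_ins_lt σ p (by omega)]
  have FG_gt : ∀ i, (p:ℕ) < i → i + 2 ≤ m → F i = G (i-1) := by
    intro i h1 h2
    simp only [hF, hG, ht, hs]
    rw [sgn_ins_gt σ p (by omega) (by omega), sgn_ins_gt σ p (by omega) (by omega)]
    have e : i + 1 - 1 = i - 1 + 1 := by omega
    rw [e]
  have tpeak1 : 1 ≤ (p:ℕ) → t ((p:ℕ) - 1) = true := fun h => sgn_ins_peak₁ σ p h
  have tpeak2 : (p:ℕ) + 1 ≤ m → t (p:ℕ) = false := fun h => sgn_ins_peak₂ σ p h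
  have tlt : ∀ i, i + 1 < (p:ℕ) → t i = s i := fun i h => sgn_ins_lt σ p h
  have tgt : ∀ i, (p:ℕ) < i → i + 1 ≤ m → t i = s (i-1) := fun i h1 h2 => sgn_ins_gt σ p h1 h2
  rcases Nat.lt_or_ge (p : ℕ) 1 with hp0 | hp1
  · -- q = 0
    have hq : (p : ℕ) = 0 := by omega
    have hD : D s m (p:ℕ) = (if s 0 then 1 else 0) := by
      rw [D, if_pos hq]
    have e1 : ∑ i ∈ Ico 0 (m-1), F i = F 0 + ∑ i ∈ Ico 1 (m-1), F i :=
      Finset.sum_eq_sum_Ico_succ_bot (by omega) F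
    have e2 : ∑ i ∈ Ico 1 (m-1), F i = ∑ i ∈ Ico 0 (m-2), F (i+1) := by
      have := sum_shift F 0 (m-2)
      rw [show m - 2 + 1 = m - 1 by omega] at this
      rw [this]
    have e3 : ∀ i ∈ Ico 0 (m-2), F (i+1) = G i := by
      intro i hi
      simp only [mem_Ico] at hi
      rw [FG_gt (i+1) (by omega) (by omega)]
      simp
    have e4 : F 0 = (if s 0 then 1 else 0) := by
      simp only [hF]
      rw [tval 0 (p:ℕ) (by omega), tpeak2 (by omega), tgt 1 (by omega) (by omega)]
      cases s 0 <;> simp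
    rw [e1, e2, Finset.sum_congr rfl e3, e4, hD]
    cases s 0 <;> simp [add_comm]
  · rcases Nat.lt_or_ge (p : ℕ) m with hpm | hpm'
    · -- 1 ≤ q ≤ m - 1
      rcases Nat.lt_or_ge 1 (p:ℕ) with hp2 | hp1'
      · rcases Nat.lt_or_ge ((p:ℕ)+1) m with hpm2 | hpm2'
        · -- (iv) 2 ≤ q ≤ m-2
          have hD : D s m (p:ℕ)
              = (if s ((p:ℕ)-1) then (if s (p:ℕ) then 2 else 0)
                 else (if s ((p:ℕ)-2) then 0 else 2)) := by
            rw [D, if_neg (show ¬ ((p:ℕ) = 0) by omega),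
              if_neg (show ¬ ((p:ℕ) = m) by omega),
              if_neg (show ¬ ((p:ℕ) + 1 = m ∧ (p:ℕ) = 1) by omega),
              if_neg (show ¬ ((p:ℕ) = 1) by omega),
              if_neg (show ¬ ((p:ℕ) + 1 = m) by omega)]
          have s1 : ∑ i ∈ Ico 0 (m-1), F i
              = ∑ i ∈ Ico 0 ((p:ℕ)-2), F i
                + (F ((p:ℕ)-2) + F ((p:ℕ)-1) + F (p:ℕ))
                + ∑ i ∈ Ico ((p:ℕ)+1) (m-1), F i := by
            have c1 := Finset.sum_Ico_consecutive F (show 0 ≤ (p:ℕ)-2 by omega)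
              (show (p:ℕ)-2 ≤ m-1 by omega)
            have c2 := Finset.sum_Ico_consecutive F (show (p:ℕ)-2 ≤ (p:ℕ)+1 by omega)
              (show (p:ℕ)+1 ≤ m-1 by omega)
            have c3 : ∑ i ∈ Ico ((p:ℕ)-2) ((p:ℕ)+1), F i = F ((p:ℕ)-2) + F ((p:ℕ)-1) + F (p:ℕ) := by
              rw [sum_Ico_three' F _ _ (by omega),
                show (p:ℕ)-2+1 = (p:ℕ)-1 by omega, show (p:ℕ)-2+2 = (p:ℕ) by omega]
            omega
          have s2 : ∑ i ∈ Ico 0 (m-2), G i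
              = ∑ i ∈ Ico 0 ((p:ℕ)-2), G i + (G ((p:ℕ)-2) + G ((p:ℕ)-1))
                + ∑ i ∈ Ico (p:ℕ) (m-2), G i := by
            have c1 := Finset.sum_Ico_consecutive G (show 0 ≤ (p:ℕ)-2 by omega)
              (show (p:ℕ)-2 ≤ m-2 by omega)
            have c2 := Finset.sum_Ico_consecutive G (show (p:ℕ)-2 ≤ (p:ℕ) by omega)
              (show (p:ℕ) ≤ m-2 by omega)
            have c3 : ∑ i ∈ Ico ((p:ℕ)-2) (p:ℕ), G i = G ((p:ℕ)-2) + G ((p:ℕ)-1) := by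
              rw [sum_Ico_two' G _ _ (by omega), show (p:ℕ)-2+1 = (p:ℕ)-1 by omega]
            omega
          have eL : ∀ i ∈ Ico 0 ((p:ℕ)-2), F i = G i := by
            intro i hi
            simp only [mem_Ico] at hi
            exact FG_lt i (by omega)
          have eRsum : ∑ i ∈ Ico ((p:ℕ)+1) (m-1), F i = ∑ i ∈ Ico (p:ℕ) (m-2), G i := by
            have := sum_shift F (p:ℕ) (m-2)
            rw [show m - 2 + 1 = m - 1 by omega] at this
            rw [this]
            apply Finset.sum_congr rfl
            intro i hi
            simp only [mem_Ico] at hi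
            rw [FG_gt (i+1) (by omega) (by omega)]
            simp
          have vA : F ((p:ℕ)-2) = (if s ((p:ℕ)-2) then 0 else 1) := by
            simp only [hF]
            rw [tval ((p:ℕ)-2+1) ((p:ℕ)-1) (by omega), tpeak1 (by omega),
              tlt ((p:ℕ)-2) (by omega)]
            cases s ((p:ℕ)-2) <;> simp
          have vB : F ((p:ℕ)-1) = 1 := by
            simp only [hF]
            rw [tval ((p:ℕ)-1+1) (p:ℕ) (by omega), tpeak1 (by omega), tpeak2 (by omega)]
            simp
          have vC : F (p:ℕ) = (if s (p:ℕ) then 1 else 0) := by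
            simp only [hF]
            rw [tpeak2 (by omega), tgt ((p:ℕ)+1) (by omega) (by omega)]
            have e : (p:ℕ)+1-1 = (p:ℕ) := by omega
            rw [e]
            cases s (p:ℕ) <;> simp
          have gA : G ((p:ℕ)-2) = (if ¬ s ((p:ℕ)-2) = s ((p:ℕ)-1) then 1 else 0) := by
            simp only [hG]
            rw [sval ((p:ℕ)-2+1) ((p:ℕ)-1) (by omega)]
          have gB : G ((p:ℕ)-1) = (if ¬ s ((p:ℕ)-1) = s (p:ℕ) then 1 else 0) := by
            simp only [hG]
            rw [sval ((p:ℕ)-1+1) (p:ℕ) (by omega)]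
          rw [s1, s2, Finset.sum_congr rfl eL, eRsum, vA, vB, vC, gA, gB, hD]
          cases hx : s ((p:ℕ)-2) <;> cases hy : s ((p:ℕ)-1) <;> cases hz : s (p:ℕ) <;>
            simp [hx, hy, hz] <;> omega
        · -- (iii) q = m-1, q ≥ 2
          have hq : (p:ℕ) = m - 1 := by omega
          have hD : D s m (p:ℕ) = (if s (m-2) then 1 else (if s (m-3) then 0 else 2)) := by
            rw [D, if_neg (show ¬ ((p:ℕ) = 0) by omega),
              if_neg (show ¬ ((p:ℕ) = m) by omega),
              if_neg (show ¬ ((p:ℕ) + 1 = m ∧ (p:ℕ) = 1) by omega),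
              if_neg (show ¬ ((p:ℕ) = 1) by omega),
              if_pos (show (p:ℕ) + 1 = m by omega)]
          have s1 : ∑ i ∈ Ico 0 (m-1), F i = ∑ i ∈ Ico 0 (m-3), F i + (F (m-3) + F (m-2)) := by
            rw [← Finset.sum_Ico_consecutive F (show 0 ≤ m-3 by omega) (show m-3 ≤ m-1 by omega)]
            congr 1
            rw [sum_Ico_two' F _ _ (by omega), show m-3+1 = m-2 by omega]
          have s2 : ∑ i ∈ Ico 0 (m-2), G i = ∑ i ∈ Ico 0 (m-3), G i + G (m-3) := by
            rw [show m - 2 = (m-3) + 1 by omega, Finset.sum_Ico_succ_top (by omega)]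
          have e3 : ∀ i ∈ Ico 0 (m-3), F i = G i := by
            intro i hi
            simp only [mem_Ico] at hi
            exact FG_lt i (by omega)
          have v1 : F (m-3) = (if s (m-3) then 0 else 1) := by
            simp only [hF]
            rw [tval (m-3+1) ((p:ℕ)-1) (by omega), tpeak1 (by omega), tlt (m-3) (by omega)]
            cases s (m-3) <;> simp
          have v2 : F (m-2) = 1 := by
            simp only [hF]
            rw [tval (m-2) ((p:ℕ)-1) (by omega), tval (m-2+1) (p:ℕ) (by omega),
              tpeak1 (by omega), tpeak2 (by omega)]
            simp
          have g1 : G (m-3) = (if ¬ s (m-3) = s (m-2) then 1 else 0) := by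
            simp only [hG]
            rw [sval (m-3+1) (m-2) (by omega)]
          rw [s1, s2, Finset.sum_congr rfl e3, v1, v2, g1, hD]
          cases hx : s (m-3) <;> cases hy : s (m-2) <;> simp [hx, hy] <;> omega
      · -- q = 1
        have hq : (p:ℕ) = 1 := by omega
        rcases Nat.lt_or_ge ((p:ℕ)+1) m with hpm2 | hpm2'
        · -- (ii) q = 1 < m-1
          have hD : D s m (p:ℕ) = (if s 0 then (if s 1 then 2 else 0) else 1) := by
            rw [D, if_neg (show ¬ ((p:ℕ) = 0) by omega),
              if_neg (show ¬ ((p:ℕ) = m) by omega),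
              if_neg (show ¬ ((p:ℕ) + 1 = m ∧ (p:ℕ) = 1) by omega),
              if_pos hq]
          have s1 : ∑ i ∈ Ico 0 (m-1), F i = (F 0 + F 1) + ∑ i ∈ Ico 2 (m-1), F i := by
            have c1 := Finset.sum_Ico_consecutive F (show (0:ℕ) ≤ 2 by omega)
              (show 2 ≤ m-1 by omega)
            have c3 : ∑ i ∈ Ico 0 2, F i = F 0 + F 1 := by
              rw [sum_Ico_two' F 0 2 (by norm_num)]
            omega
          have s2 : ∑ i ∈ Ico 0 (m-2), G i = G 0 + ∑ i ∈ Ico 1 (m-2), G i :=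
            Finset.sum_eq_sum_Ico_succ_bot (by omega) G
          have e2 : ∑ i ∈ Ico 2 (m-1), F i = ∑ i ∈ Ico 1 (m-2), G i := by
            have := sum_shift F 1 (m-2)
            rw [show m - 2 + 1 = m - 1 by omega] at this
            rw [this]
            apply Finset.sum_congr rfl
            intro i hi
            simp only [mem_Ico] at hi
            rw [FG_gt (i+1) (by omega) (by omega)]
            simp
          have v1 : F 0 = 1 := by
            simp only [hF]
            rw [tval 0 ((p:ℕ)-1) (by omega), tval 1 (p:ℕ) (by omega),
              tpeak1 (by omega), tpeak2 (by omega)]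
            simp
          have v2 : F 1 = (if s 1 then 1 else 0) := by
            simp only [hF]
            rw [tval 1 (p:ℕ) (by omega), tpeak2 (by omega), tgt 2 (by omega) (by omega)]
            norm_num
          rw [s1, s2, e2, v1, v2, hD]
          simp only [hG]
          cases hx : s 0 <;> cases hy : s 1 <;> simp [hx, hy] <;> omega
        · -- (i) q = 1 = m-1, m = 2
          have hm2 : m = 2 := by omega
          have hD : D s m (p:ℕ) = 1 := by
            rw [D, if_neg (show ¬ ((p:ℕ) = 0) by omega),
              if_neg (show ¬ ((p:ℕ) = m) by omega),
              if_pos (show (p:ℕ) + 1 = m ∧ (p:ℕ) = 1 by omega)]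
          have v1 : F 0 = 1 := by
            simp only [hF]
            rw [tval 0 ((p:ℕ)-1) (by omega), tval 1 (p:ℕ) (by omega),
              tpeak1 (by omega), tpeak2 (by omega)]
            simp
          subst hm2
          rw [show (2:ℕ)-1 = 1 from rfl, show (2:ℕ)-2 = 0 from rfl]
          simp only [Nat.Ico_zero_eq_range, Finset.sum_range_one, Finset.range_zero,
            Finset.sum_empty]
          rw [v1, hD]
          norm_num
    · -- q = m
      have hq : (p : ℕ) = m := by omega
      have hD : D s m (p:ℕ) = (if s (m-2) then 0 else 1) := by
        rw [D, if_neg (show ¬ ((p:ℕ) = 0) by omega), if_pos hq]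
      have s1 : ∑ i ∈ Ico 0 (m-1), F i = ∑ i ∈ Ico 0 (m-2), F i + F (m-2) := by
        rw [show m - 1 = (m-2) + 1 by omega, Finset.sum_Ico_succ_top (by omega)]
      have e2 : ∀ i ∈ Ico 0 (m-2), F i = G i := by
        intro i hi
        simp only [mem_Ico] at hi
        exact FG_lt i (by omega)
      have v1 : F (m-2) = (if s (m-2) then 0 else 1) := by
        simp only [hF]
        rw [tval (m-2+1) ((p:ℕ)-1) (by omega), tpeak1 (by omega), tlt (m-2) (by omega)]
        cases s (m-2) <;> simp
      rw [s1, Finset.sum_congr rfl e2, v1, hD]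
      cases s (m-2) <;> simp <;> omega

lemma D_le (s : ℕ → Bool) (m p : ℕ) : D s m p ≤ 2 := by
  unfold D
  split_ifs <;> omega

lemma tele (s : ℕ → Bool) (b : ℕ) :
    (∑ i ∈ Finset.range b, if s i = true ∧ s (i+1) = false then (1:ℕ) else 0)
      + (if s b then 1 else 0)
    = (∑ i ∈ Finset.range b, if s i = false ∧ s (i+1) = true then (1:ℕ) else 0)
      + (if s 0 then 1 else 0) := by
  induction b with
  | zero => simp
  | succ n ih =>
      rw [Finset.sum_range_succ, Finset.sum_range_succ]
      cases hn : s n <;> cases hn1 : s (n+1) <;> simp [hn, hn1] at ih ⊢ <;> omega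

lemma count_D0 (s : ℕ → Bool) {m : ℕ} (hm : 2 ≤ m) :
    ((Finset.range (m + 1)).filter (fun p => D s m p = 0)).card
      = 1 + ((Finset.Ico 1 (m - 1)).filter (fun i => ¬ s (i - 1) = s i)).card := by
  rw [Finset.card_filter, Finset.card_filter, card_alt s (m-2) (m-1) (by omega)]
  simp only [Finset.range_eq_Ico]
  set f : ℕ → ℕ := fun p => if D s m p = 0 then 1 else 0 with hf
  have e0 : ∑ p ∈ Ico 0 (m+1), f p = f 0 + ∑ p ∈ Ico 1 (m+1), f p :=
    Finset.sum_eq_sum_Ico_succ_bot (by omega) f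
  have e1 : ∑ p ∈ Ico 1 (m+1), f p = ∑ p ∈ Ico 1 m, f p + f m :=
    (Finset.sum_Ico_succ_top (by omega) f)
  have hD0 : D s m 0 = (if s 0 then 1 else 0) := by rw [D, if_pos rfl]
  have hDm : D s m m = (if s (m-2) then 0 else 1) := by
    rw [D, if_neg (show ¬ (m = 0) by omega), if_pos rfl]
  have f0 : f 0 = (if s 0 then 0 else 1) := by
    simp only [hf, hD0]
    cases s 0 <;> simp
  have fm : f m = (if s (m-2) then 1 else 0) := by
    simp only [hf, hDm]
    cases s (m-2) <;> simp
  have emid : ∀ p ∈ Ico 1 m, f p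
      = ((if s (p-1) = true ∧ s p = false ∧ p + 1 < m then 1 else 0)
        + (if s (p-2) = true ∧ s (p-1) = false ∧ 2 ≤ p then 1 else 0)) := by
    intro p hp
    simp only [mem_Ico] at hp
    simp only [hf]
    rw [D, if_neg (show ¬ (p = 0) by omega), if_neg (show ¬ (p = m) by omega)]
    by_cases h1 : p + 1 = m ∧ p = 1
    · rw [if_pos h1]
      simp [show ¬ (p + 1 < m) by omega, show ¬ (2 ≤ p) by omega]
    · rw [if_neg h1]
      by_cases h2 : p = 1
      · rw [if_pos h2]
        subst h2
        have hm3 : 1 + 1 < m := by omega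
        simp only [show (1:ℕ) - 1 = 0 from rfl]
        cases hx : s 0 <;> cases hy : s 1 <;>
          simp [hx, hy, hm3, show ¬ (2 ≤ 1) by omega]
      · rw [if_neg h2]
        by_cases h3 : p + 1 = m
        · rw [if_pos h3]
          rw [show p - 1 = m - 2 by omega, show p - 2 = m - 3 by omega]
          cases hx : s (m-3) <;> cases hy : s (m-2) <;>
            simp [hx, hy, show ¬ (p + 1 < m) by omega, show 2 ≤ p by omega]
        · rw [if_neg h3]
          cases hx : s (p-2) <;> cases hy : s (p-1) <;> cases hz : s p <;>
            simp [hx, hy, hz, show p + 1 < m by omega, show 2 ≤ p by omega]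
  have esplit : ∑ p ∈ Ico 1 m, f p
      = ∑ p ∈ Ico 1 m, (if s (p-1) = true ∧ s p = false ∧ p + 1 < m then 1 else 0)
        + ∑ p ∈ Ico 1 m, (if s (p-2) = true ∧ s (p-1) = false ∧ 2 ≤ p then 1 else 0) := by
    rw [Finset.sum_congr rfl emid, Finset.sum_add_distrib]
  -- first piece
  have eA : ∑ p ∈ Ico 1 m, (if s (p-1) = true ∧ s p = false ∧ p + 1 < m then (1:ℕ) else 0)
      = ∑ i ∈ Ico 0 (m-2), (if s i = true ∧ s (i+1) = false then 1 else 0) := by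
    rw [← Finset.sum_Ico_consecutive _ (show 1 ≤ m-1 by omega) (show m-1 ≤ m by omega)]
    have z1 : ∑ p ∈ Ico (m-1) m, (if s (p-1) = true ∧ s p = false ∧ p + 1 < m then (1:ℕ) else 0) = 0 := by
      apply Finset.sum_eq_zero
      intro p hp
      simp only [mem_Ico] at hp
      simp [show ¬ (p + 1 < m) by omega]
    rw [z1, add_zero]
    have := sum_shift (fun p => if s (p-1) = true ∧ s p = false ∧ p + 1 < m then (1:ℕ) else 0) 0 (m-2)
    rw [show m - 2 + 1 = m - 1 by omega] at this
    rw [this]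
    apply Finset.sum_congr rfl
    intro i hi
    simp only [mem_Ico] at hi
    simp only [Nat.add_sub_cancel]
    simp [show i + 1 + 1 < m by omega]
  have eB : ∑ p ∈ Ico 1 m, (if s (p-2) = true ∧ s (p-1) = false ∧ 2 ≤ p then (1:ℕ) else 0)
      = ∑ i ∈ Ico 0 (m-2), (if s i = true ∧ s (i+1) = false then 1 else 0) := by
    rw [← Finset.sum_Ico_consecutive _ (show 1 ≤ 2 by omega) (show 2 ≤ m by omega)]
    have z1 : ∑ p ∈ Ico 1 2, (if s (p-2) = true ∧ s (p-1) = false ∧ 2 ≤ p then (1:ℕ) else 0) = 0 := by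
      apply Finset.sum_eq_zero
      intro p hp
      simp only [mem_Ico] at hp
      simp [show ¬ (2 ≤ p) by omega]
    rw [z1, zero_add]
    have s2 := sum_shift (fun p => if s (p-2) = true ∧ s (p-1) = false ∧ 2 ≤ p then (1:ℕ) else 0) 1 (m-1)
    rw [show m - 1 + 1 = m by omega] at s2
    rw [s2]
    have s3 := sum_shift (fun p => if s (p+1-2) = true ∧ s (p+1-1) = false ∧ 2 ≤ p+1 then (1:ℕ) else 0) 0 (m-2)
    rw [show m - 2 + 1 = m - 1 by omega] at s3
    rw [s3]
    apply Finset.sum_congr rfl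
    intro i hi
    simp only [mem_Ico] at hi
    simp only [show i + 1 + 1 - 2 = i by omega, show i + 1 + 1 - 1 = i + 1 by omega]
    simp [show 2 ≤ i + 1 + 1 by omega]
  have ePt : ∀ i ∈ Ico 0 (m-2), (if ¬ s i = s (i+1) then (1:ℕ) else 0)
      = (if s i = true ∧ s (i+1) = false then 1 else 0)
        + (if s i = false ∧ s (i+1) = true then 1 else 0) := by
    intro i _
    cases hx : s i <;> cases hy : s (i+1) <;> simp [hx, hy]
  have eR : ∑ i ∈ Ico 0 (m-2), (if ¬ s i = s (i+1) then (1:ℕ) else 0)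
      = ∑ i ∈ Ico 0 (m-2), (if s i = true ∧ s (i+1) = false then (1:ℕ) else 0)
        + ∑ i ∈ Ico 0 (m-2), (if s i = false ∧ s (i+1) = true then (1:ℕ) else 0) := by
    rw [Finset.sum_congr rfl ePt, Finset.sum_add_distrib]
  have htele := tele s (m-2)
  simp only [Finset.range_eq_Ico] at htele
  rw [e0, e1, esplit, eA, eB, f0, fm, eR]
  cases hx : s 0 <;> cases hy : s (m-2) <;> simp [hx, hy] at htele ⊢ <;> omega

lemma count_D1 (s : ℕ → Bool) {m : ℕ} (hm : 2 ≤ m) :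
    ((Finset.range (m + 1)).filter (fun p => D s m p = 1)).card = 2 := by
  rw [Finset.card_filter]
  simp only [Finset.range_eq_Ico]
  set f : ℕ → ℕ := fun p => if D s m p = 1 then 1 else 0 with hf
  have e0 : ∑ p ∈ Ico 0 (m+1), f p = f 0 + ∑ p ∈ Ico 1 (m+1), f p :=
    Finset.sum_eq_sum_Ico_succ_bot (by omega) f
  have e1 : ∑ p ∈ Ico 1 (m+1), f p = ∑ p ∈ Ico 1 m, f p + f m :=
    (Finset.sum_Ico_succ_top (by omega) f)
  have f0 : f 0 = (if s 0 then 1 else 0) := by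
    simp only [hf, D, if_pos rfl]
    cases s 0 <;> simp
  have fm : f m = (if s (m-2) then 0 else 1) := by
    simp only [hf]
    rw [D, if_neg (show ¬ (m = 0) by omega), if_pos rfl]
    cases s (m-2) <;> simp
  rcases Nat.lt_or_ge 2 m with hm3 | hm2
  · -- m ≥ 3
    have eM : ∑ p ∈ Ico 1 m, f p = f 1 + (∑ p ∈ Ico 2 (m-1), f p + f (m-1)) := by
      rw [← Finset.sum_Ico_consecutive f (show 1 ≤ 2 by omega) (show 2 ≤ m by omega),
        ← Finset.sum_Ico_consecutive f (show 2 ≤ m-1 by omega) (show m-1 ≤ m by omega),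
        sum_Ico_one' f 1 2 (by omega), sum_Ico_one' f (m-1) m (by omega)]
    have f1 : f 1 = (if s 0 then 0 else 1) := by
      simp only [hf]
      rw [D, if_neg (show ¬ (1 = 0) by omega), if_neg (show ¬ (1 = m) by omega),
        if_neg (show ¬ (1 + 1 = m ∧ 1 = 1) by omega), if_pos rfl]
      cases hx : s 0 <;> cases hy : s 1 <;> simp [hx, hy]
    have fm1 : f (m-1) = (if s (m-2) then 1 else 0) := by
      simp only [hf]
      rw [D, if_neg (show ¬ (m-1 = 0) by omega), if_neg (show ¬ (m-1 = m) by omega),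
        if_neg (show ¬ (m-1 + 1 = m ∧ m-1 = 1) by omega),
        if_neg (show ¬ (m-1 = 1) by omega), if_pos (show m-1+1 = m by omega)]
      cases hx : s (m-2) <;> cases hy : s (m-3) <;> simp [hx, hy]
    have emid : ∑ p ∈ Ico 2 (m-1), f p = 0 := by
      apply Finset.sum_eq_zero
      intro p hp
      simp only [mem_Ico] at hp
      simp only [hf]
      rw [D, if_neg (show ¬ (p = 0) by omega), if_neg (show ¬ (p = m) by omega),
        if_neg (show ¬ (p + 1 = m ∧ p = 1) by omega), if_neg (show ¬ (p = 1) by omega),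
        if_neg (show ¬ (p + 1 = m) by omega)]
      cases hx : s (p-2) <;> cases hy : s (p-1) <;> cases hz : s p <;> simp [hx, hy, hz]
    rw [e0, e1, eM, f0, fm, f1, fm1, emid]
    cases hx : s 0 <;> cases hy : s (m-2) <;> simp [hx, hy]
  · -- m = 2
    have hm2' : m = 2 := by omega
    subst hm2'
    have eM : ∑ p ∈ Ico 1 2, f p = f 1 := by
      simp [Finset.sum_Ico_eq_sum_range]
    have f1 : f 1 = 1 := by
      simp only [hf]
      rw [D, if_neg (show ¬ (1 = 0) by omega), if_neg (show ¬ (1 = 2) by omega),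
        if_pos (show 1 + 1 = 2 ∧ 1 = 1 by omega)]
      norm_num
    rw [e0, e1, eM, f0, fm, f1]
    cases s 0 <;> simp [show (2:ℕ) - 2 = 0 from rfl]

lemma count_Dpartition (s : ℕ → Bool) (m : ℕ) :
    ((Finset.range (m + 1)).filter (fun p => D s m p = 0)).card
      + ((Finset.range (m + 1)).filter (fun p => D s m p = 1)).card
      + ((Finset.range (m + 1)).filter (fun p => D s m p = 2)).card = m + 1 := by
  rw [Finset.card_filter, Finset.card_filter, Finset.card_filter,
    ← Finset.sum_add_distrib, ← Finset.sum_add_distrib]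
  have : ∀ p ∈ Finset.range (m+1),
      ((if D s m p = 0 then (1:ℕ) else 0) + (if D s m p = 1 then 1 else 0))
        + (if D s m p = 2 then 1 else 0) = 1 := by
    intro p _
    have h := D_le s m p
    rcases (show D s m p = 0 ∨ D s m p = 1 ∨ D s m p = 2 by omega) with h' | h' | h' <;>
      simp [h']
  rw [Finset.sum_congr rfl this]
  simp

lemma card_filter_fin (n : ℕ) (Q : ℕ → Prop) [DecidablePred Q] :
    (Finset.univ.filter (fun p : Fin n => Q (p : ℕ))).card
      = ((Finset.range n).filter Q).card := by
  apply Finset.card_bij (fun (p : Fin n) _ => (p : ℕ))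
  · intro a ha
    simp only [Finset.mem_filter, Finset.mem_univ, true_and] at ha
    simp [Finset.mem_filter, a.isLt, ha]
  · intro a _ b _ h
    exact Fin.val_injective h
  · intro b hb
    simp only [Finset.mem_filter, Finset.mem_range] at hb
    exact ⟨⟨b, hb.1⟩, by simp [hb.2], rfl⟩

lemma count_slots {m : ℕ} (hm : 1 ≤ m) (σ : Equiv.Perm (Fin m)) (k : ℕ) :
    (Finset.univ.filter (fun p : Fin (m + 1) => runs (m + 1) (insPerm σ p) = k)).card
      = (if k = runs m σ then runs m σ
         else if k = runs m σ + 1 then 2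
         else if k = runs m σ + 2 then m - 1 - runs m σ else 0) := by
  rcases Nat.lt_or_ge m 2 with hm1 | hm2
  · -- m = 1
    have hm1' : m = 1 := by omega
    subst hm1'
    have hr : runs 1 σ = 0 := by rw [runs, if_pos (by omega)]
    have hins : ∀ p : Fin 2, runs 2 (insPerm σ p) = 1 := by
      intro p
      rw [runs, if_neg (by omega)]
      simp
    have : (Finset.univ.filter (fun p : Fin 2 => runs 2 (insPerm σ p) = k))
        = Finset.univ.filter (fun _ : Fin 2 => 1 = k) := by
      apply Finset.filter_congr
      intro p _
      rw [hins p]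
    rw [this, hr]
    by_cases hk : 1 = k
    · rw [Finset.filter_true_of_mem (fun _ _ => hk), if_neg (by omega), if_pos (by omega)]
      simp
    · rw [Finset.filter_false_of_mem (fun _ _ => hk)]
      simp only [Finset.card_empty]
      have h1 : ¬ (k = 0 + 1) := by omega
      rcases eq_or_ne k 0 with h | h
      · simp [h]
      · rcases eq_or_ne k 2 with h2 | h2
        · simp [h2, show ¬ ((2:ℕ) = 0) by omega, show ¬ ((2:ℕ) = 0 + 1) by omega]
        · rw [if_neg (by omega), if_neg (by omega), if_neg (by omega)]
  · -- m ≥ 2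
    set r := runs m σ with hrr
    have hcongr : (Finset.univ.filter (fun p : Fin (m + 1) => runs (m + 1) (insPerm σ p) = k))
        = Finset.univ.filter (fun p : Fin (m + 1) => r + D (sgn σ) m (p : ℕ) = k) := by
      apply Finset.filter_congr
      intro p _
      rw [runs_ins σ hm2 p]
    rw [hcongr, card_filter_fin (m+1) (fun q => r + D (sgn σ) m q = k)]
    have hr : r = 1 + ((Finset.Ico 1 (m - 1)).filter
        (fun i => ¬ sgn σ (i - 1) = sgn σ i)).card := by
      rw [hrr, runs_eq_alt hm2 σ]
    have h0 : ((Finset.range (m + 1)).filter (fun p => D (sgn σ) m p = 0)).card = r := by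
      rw [count_D0 (sgn σ) hm2, ← hr]
    have h1 := count_D1 (sgn σ) hm2
    have hpart := count_Dpartition (sgn σ) m
    by_cases hk0 : k = r
    · rw [if_pos hk0]
      rw [← h0]
      apply congrArg
      apply Finset.filter_congr
      intro p _
      omega
    · rw [if_neg hk0]
      by_cases hk1 : k = r + 1
      · rw [if_pos hk1]
        rw [← h1]
        apply congrArg
        apply Finset.filter_congr
        intro p _
        omega
      · rw [if_neg hk1]
        by_cases hk2 : k = r + 2
        · rw [if_pos hk2]
          have : ((Finset.range (m + 1)).filter (fun p => r + D (sgn σ) m p = k)).card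
              = ((Finset.range (m + 1)).filter (fun p => D (sgn σ) m p = 2)).card := by
            apply congrArg
            apply Finset.filter_congr
            intro p _
            omega
          rw [this]
          omega
        · rw [if_neg hk2]
          rw [Finset.card_eq_zero, Finset.filter_eq_empty_iff]
          intro p _
          have := D_le (sgn σ) m p
          omega

lemma insPerm_injective {m : ℕ} :
    Function.Injective (fun x : Equiv.Perm (Fin m) × Fin (m + 1) => insPerm x.1 x.2) := by
  rintro ⟨σ, p⟩ ⟨σ', p'⟩ h
  simp only at h
  have happ : ∀ j, insPerm σ p j = insPerm σ' p' j := fun j => by rw [h]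
  have hp : p = p' := by
    by_contra hne
    obtain ⟨j, hj⟩ := Fin.exists_succAbove_eq hne
    have h1 : insPerm σ p p = Fin.last m := by
      rw [insPerm_apply, insFun]
      exact Fin.insertNth_apply_same p _ _
    have h2 : insPerm σ' p' p = (σ' j).castSucc := by
      rw [← hj, insPerm_apply, insFun]
      exact Fin.insertNth_apply_succAbove p' _ _ j
    have := (happ p).symm.trans h1
    rw [h2] at this
    exact absurd this (Fin.castSucc_lt_last (σ' j)).ne
  subst hp
  have hσ : σ = σ' := by
    apply Equiv.ext
    intro j
    have h1 : insPerm σ p (p.succAbove j) = (σ j).castSucc := by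
      rw [insPerm_apply, insFun]
      exact Fin.insertNth_apply_succAbove p _ _ j
    have h2 : insPerm σ' p (p.succAbove j) = (σ' j).castSucc := by
      rw [insPerm_apply, insFun]
      exact Fin.insertNth_apply_succAbove p _ _ j
    have := (h1.symm.trans (happ _)).trans h2
    exact Fin.castSucc_injective m this
  rw [hσ]

lemma R_succ (m : ℕ) (k : ℕ) :
    R (m + 1) k = ∑ σ : Equiv.Perm (Fin m),
      (Finset.univ.filter (fun p : Fin (m + 1) => runs (m + 1) (insPerm σ p) = k)).card := by
  have hbij : Function.Bijective
      (fun x : Equiv.Perm (Fin m) × Fin (m + 1) => insPerm x.1 x.2) := by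
    rw [Fintype.bijective_iff_injective_and_card]
    refine ⟨insPerm_injective, ?_⟩
    simp [Fintype.card_perm, Nat.factorial_succ, mul_comm]
  set e := Equiv.ofBijective _ hbij with he
  have hcard : R (m+1) k = (Finset.univ.filter
      (fun x : Equiv.Perm (Fin m) × Fin (m + 1) => runs (m+1) (insPerm x.1 x.2) = k)).card := by
    rw [R]
    apply (Finset.card_equiv e ?_).symm
    intro x
    simp [he, Equiv.ofBijective]
  rw [hcard, Finset.card_filter, ← Finset.univ_product_univ, Finset.sum_product]
  apply Finset.sum_congr rfl
  intro σ _
  rw [Finset.card_filter]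

lemma runs_le {m : ℕ} (hm : 1 ≤ m) (σ : Equiv.Perm (Fin m)) : runs m σ ≤ m - 1 := by
  rcases Nat.lt_or_ge m 2 with h | h
  · rw [runs, if_pos (by omega)]
    omega
  · rw [runs, if_neg (by omega)]
    have := Finset.card_filter_le (Finset.Ico 1 (m-1)) (fun i =>
      (permVal σ (i - 1) < permVal σ i ∧ permVal σ (i + 1) < permVal σ i) ∨
      (permVal σ i < permVal σ (i - 1) ∧ permVal σ i < permVal σ (i + 1)))
    rw [Nat.card_Ico] at this
    omega

lemma R_zero_of_large {m k : ℕ} (hm : 1 ≤ m) (hk : m - 1 < k) : R m k = 0 := by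
  rw [R, Finset.card_eq_zero, Finset.filter_eq_empty_iff]
  intro σ _
  have := runs_le hm σ
  omega

lemma recurrenceN {m : ℕ} (hm : 1 ≤ m) (k : ℕ) (hk : 1 ≤ k) :
    R (m + 1) k = k * R m k + 2 * R m (k - 1)
      + (if 2 ≤ k then (m + 1 - k) * R m (k - 2) else 0) := by
  rw [R_succ m k]
  have hcnt : ∀ σ : Equiv.Perm (Fin m),
      (Finset.univ.filter (fun p : Fin (m + 1) => runs (m + 1) (insPerm σ p) = k)).card
      = (if k = runs m σ then runs m σ
         else if k = runs m σ + 1 then 2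
         else if k = runs m σ + 2 then m - 1 - runs m σ else 0) := fun σ => count_slots hm σ k
  rw [Finset.sum_congr rfl (fun σ _ => hcnt σ)]
  set f : Equiv.Perm (Fin m) → ℕ := fun σ =>
      (if k = runs m σ then runs m σ
       else if k = runs m σ + 1 then 2
       else if k = runs m σ + 2 then m - 1 - runs m σ else 0) with hf
  rw [← Finset.sum_filter_add_sum_filter_not Finset.univ (fun σ => runs m σ = k) f]
  have t1 : ∑ σ ∈ Finset.univ.filter (fun σ => runs m σ = k), f σ = k * R m k := by
    have hv : ∀ σ ∈ Finset.univ.filter (fun σ => runs m σ = k), f σ = k := by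
      intro σ hσ
      simp only [Finset.mem_filter] at hσ
      simp [hf, hσ.2]
    rw [Finset.sum_congr rfl hv, Finset.sum_const, R, smul_eq_mul, mul_comm]
  rw [t1]
  rw [← Finset.sum_filter_add_sum_filter_not
    (Finset.univ.filter (fun σ => ¬ runs m σ = k)) (fun σ => runs m σ = k - 1) f]
  have hAB : (Finset.univ.filter (fun σ => ¬ runs m σ = k)).filter (fun σ => runs m σ = k - 1)
      = Finset.univ.filter (fun σ => runs m σ = k - 1) := by
    rw [Finset.filter_filter]
    apply Finset.filter_congr
    intro σ _
    constructor
    · rintro ⟨_, h⟩; exact h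
    · intro h; exact ⟨by omega, h⟩
  have t2 : ∑ σ ∈ (Finset.univ.filter (fun σ => ¬ runs m σ = k)).filter
      (fun σ => runs m σ = k - 1), f σ = 2 * R m (k-1) := by
    have hv : ∀ σ ∈ Finset.univ.filter (fun σ => runs m σ = k - 1), f σ = 2 := by
      intro σ hσ
      simp only [Finset.mem_filter] at hσ
      have h2 := hσ.2
      simp only [hf]
      rw [if_neg (show ¬ k = runs m σ by omega), if_pos (show k = runs m σ + 1 by omega)]
    rw [hAB, Finset.sum_congr rfl hv, Finset.sum_const, R, smul_eq_mul, mul_comm]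
  rw [t2]
  set B := (Finset.univ.filter (fun σ => ¬ runs m σ = k)).filter
    (fun σ => ¬ runs m σ = k - 1) with hB
  rcases Nat.lt_or_ge k 2 with hk1 | hk2
  · -- k = 1
    have hk1' : k = 1 := by omega
    subst hk1'
    have t3 : ∑ σ ∈ B, f σ = 0 := by
      apply Finset.sum_eq_zero
      intro σ hσ
      simp only [hB, Finset.mem_filter] at hσ
      simp only [hf, if_neg (show ¬ 1 = runs m σ by omega),
        if_neg (show ¬ 1 = runs m σ + 1 by omega), if_neg (show ¬ 1 = runs m σ + 2 by omega)]
    rw [t3, if_neg (by omega)]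
    omega
  · rw [← Finset.sum_filter_add_sum_filter_not B (fun σ => runs m σ = k - 2) f]
    have hC : B.filter (fun σ => runs m σ = k - 2)
        = Finset.univ.filter (fun σ => runs m σ = k - 2) := by
      rw [hB, Finset.filter_filter, Finset.filter_filter]
      apply Finset.filter_congr
      intro σ _
      constructor
      · rintro ⟨_, _, h⟩; exact h
      · intro h; exact ⟨by omega, by omega, h⟩
    have t3 : ∑ σ ∈ B.filter (fun σ => runs m σ = k - 2), f σ = (m + 1 - k) * R m (k-2) := by
      have hv : ∀ σ ∈ Finset.univ.filter (fun σ => runs m σ = k - 2), f σ = m + 1 - k := by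
        intro σ hσ
        simp only [Finset.mem_filter] at hσ
        have h2 := hσ.2
        simp only [hf]
        rw [if_neg (show ¬ k = runs m σ by omega), if_neg (show ¬ k = runs m σ + 1 by omega),
          if_pos (show k = runs m σ + 2 by omega)]
        omega
      rw [hC, Finset.sum_congr rfl hv, Finset.sum_const, R, smul_eq_mul, mul_comm]
    have t4 : ∑ σ ∈ B.filter (fun σ => ¬ runs m σ = k - 2), f σ = 0 := by
      apply Finset.sum_eq_zero
      intro σ hσ
      simp only [hB, Finset.mem_filter] at hσ
      simp only [hf, if_neg (show ¬ k = runs m σ by omega),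
        if_neg (show ¬ k = runs m σ + 1 by omega), if_neg (show ¬ k = runs m σ + 2 by omega)]
    rw [t3, t4, if_pos hk2]
    omega

lemma R_one_zero : R 1 0 = 1 := by
  rw [R]
  have h : ∀ π : Equiv.Perm (Fin 1), runs 1 π = 0 := by
    intro π
    rw [runs, if_pos (by omega)]
  rw [Finset.filter_true_of_mem (fun π _ => h π)]
  simp [Fintype.card_perm]

lemma R_one_pos (k : ℕ) (hk : 1 ≤ k) : R 1 k = 0 := by
  rw [R, Finset.card_eq_zero, Finset.filter_eq_empty_iff]
  intro π _
  rw [runs, if_pos (by omega)]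
  omega

/-- André's recurrence for the numbers of permutations by alternating runs. -/
theorem andre_recurrence :
    (∀ n : ℕ, 2 ≤ n → ∀ k : ℤ, 1 ≤ k →
      Rk n k = k * Rk (n - 1) k + 2 * Rk (n - 1) (k - 1) + ((n : ℤ) - k) * Rk (n - 1) (k - 2))
    ∧ R 1 0 = 1 ∧ (∀ k : ℕ, 1 ≤ k → R 1 k = 0) := by
  refine ⟨?_, R_one_zero, R_one_pos⟩
  intro n hn k hk
  set m := n - 1 with hm
  have hn' : n = m + 1 := by omega
  have hm1 : 1 ≤ m := by omega
  obtain ⟨kn, rfl⟩ : ∃ kn : ℕ, k = (kn : ℤ) := ⟨k.toNat, by omega⟩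
  have hkn : 1 ≤ kn := by exact_mod_cast hk
  have hrec := recurrenceN hm1 kn hkn
  rw [hn'] at *
  have e1 : (((kn:ℕ) : ℤ)).toNat = kn := by omega
  have e2 : (((kn:ℕ) : ℤ) - 1).toNat = kn - 1 := by omega
  rcases Nat.lt_or_ge kn 2 with hk1 | hk2
  · -- kn = 1
    rw [Rk, if_pos (by omega), Rk, if_pos (by omega), Rk, if_pos (by omega),
      Rk, if_neg (by omega), e1, e2]
    rw [if_neg (by omega)] at hrec
    rw [hrec]
    push_cast
    ring
  · rw [Rk, if_pos (by omega), Rk, if_pos (by omega), Rk, if_pos (by omega),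
      Rk, if_pos (by omega)]
    rw [if_pos hk2] at hrec
    have e3 : (((kn:ℕ) : ℤ) - 2).toNat = kn - 2 := by omega
    rw [e1, e2, e3]
    rcases Nat.lt_or_ge (m + 1) kn with hbig | hsmall
    · -- kn > m+1 : everything vanishes
      have z1 : R (m+1) kn = 0 := R_zero_of_large (by omega) (by omega)
      have z2 : R m kn = 0 := R_zero_of_large hm1 (by omega)
      have z3 : R m (kn - 1) = 0 := R_zero_of_large hm1 (by omega)
      have z4 : R m (kn - 2) = 0 := R_zero_of_large hm1 (by omega)
      rw [z1, z2, z3, z4]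
      push_cast
      ring
    · have hco : ((m + 1 - kn : ℕ) : ℤ) = (m:ℤ) + 1 - kn := by omega
      rw [hrec]
      push_cast [hco]
      ring
end Delta
end

section
/- The polynomials R_n(x) = Σ_{k=1}^{n-1} R(n,k) x^k satisfy the recurrence R_{n+2}(x) = x(nx+2) R_{n+1}(x) + x(1-x²) R_{n+1}'(x), with initial values R_1(x) = 1 and R_2(x) = 2x. -/
open Polynomial Finset

namespace RunsAux

def sA (f : ℕ → ℕ) (j : ℕ) : Prop := f j < f (j+1)
instance (f : ℕ → ℕ) (j : ℕ) : Decidable (sA f j) := by unfold sA; infer_instance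
def cA (f : ℕ → ℕ) (i : ℕ) : Prop := ¬ (sA f (i-1) ↔ sA f i)
instance (f : ℕ → ℕ) (i : ℕ) : Decidable (cA f i) := by unfold cA; infer_instance
def chgCnt (f : ℕ → ℕ) (L : ℕ) : ℕ := ((Finset.Ico 1 L).filter (fun i => cA f i)).card
def insf (f : ℕ → ℕ) (p M : ℕ) : ℕ → ℕ := fun j => if j < p then f j else if j = p then M else f (j-1)
def cond2 (f : ℕ → ℕ) (m p : ℕ) : Prop :=
  (1 ≤ p ∧ p ≤ m-2 ∧ sA f (p-1) ∧ sA f p) ∨ (2 ≤ p ∧ p ≤ m-1 ∧ ¬ sA f (p-2) ∧ ¬ sA f (p-1))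
def cond1 (f : ℕ → ℕ) (m p : ℕ) : Prop :=
  (p = 0 ∧ sA f 0) ∨ (p = 1 ∧ ¬ sA f 0) ∨ (p = m ∧ ¬ sA f (m-2)) ∨ (p = m-1 ∧ sA f (m-2))
instance (f : ℕ → ℕ) (m p : ℕ) : Decidable (cond2 f m p) := by unfold cond2; infer_instance
instance (f : ℕ → ℕ) (m p : ℕ) : Decidable (cond1 f m p) := by unfold cond1; infer_instance
def D (f : ℕ → ℕ) (m p : ℕ) : ℕ := if cond2 f m p then 2 else if cond1 f m p then 1 else 0
lemma reindex (F : ℕ → ℕ) (a b : ℕ) :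
    ∑ i ∈ Finset.Ico (a+1) (b+1), F i = ∑ i ∈ Finset.Ico a b, F (i+1) := by
  rw [Finset.sum_Ico_eq_sum_range, Finset.sum_Ico_eq_sum_range]
  simp only [Nat.add_sub_add_right]
  exact Finset.sum_congr rfl (fun i _ => by congr 1; omega)

lemma chg_insf (f : ℕ → ℕ) (M m : ℕ) (hm : 2 ≤ m) (hfM : ∀ j, j < m → f j < M)
    (p : ℕ) (hp : p ≤ m) :
    chgCnt (insf f p M) m = chgCnt f (m-1) + D f m p := by
  set g := insf f p M with hg
  have G1 : ∀ j, j < p → g j = f j := by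
    intro j h; simp only [hg, insf]; rw [if_pos h]
  have G2 : g p = M := by
    simp [hg, insf]
  have G3 : ∀ j, p < j → g j = f (j-1) := by
    intro j h; simp only [hg, insf]; rw [if_neg (by omega), if_neg (by omega)]
  have S1 : ∀ j, j + 1 < p → (sA g j ↔ sA f j) := by
    intro j h; unfold sA; rw [G1 j (by omega), G1 (j+1) h]
  have S2 : 1 ≤ p → sA g (p-1) := by
    intro h1; unfold sA
    rw [G1 (p-1) (by omega), show p - 1 + 1 = p by omega, G2]
    exact hfM (p-1) (by omega)
  have S3 : p < m → ¬ sA g p := by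
    intro h; unfold sA
    rw [G2, G3 (p+1) (by omega), Nat.add_sub_cancel]
    have := hfM p h; omega
  have S4 : ∀ j, p < j → (sA g j ↔ sA f (j-1)) := by
    intro j h; unfold sA
    rw [G3 j h, G3 (j+1) (by omega), show j + 1 - 1 = j - 1 + 1 by omega]
  have C1 : ∀ i, 1 ≤ i → i + 1 < p → (cA g i ↔ cA f i) := by
    intro i h1 h2; unfold cA
    rw [S1 (i-1) (by omega), S1 i h2]
  have C2 : 2 ≤ p → (cA g (p-1) ↔ ¬ sA f (p-2)) := by
    intro h2; unfold cA
    rw [show p-1-1 = p-2 by omega, S1 (p-2) (by omega)]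
    have h := S2 (by omega)
    constructor
    · intro hn hs; exact hn (iff_of_true hs h)
    · intro hn hiff; exact hn (hiff.mpr h)
  have C3 : 1 ≤ p → p < m → cA g p := by
    intro h1 h2; unfold cA
    have ha := S2 h1; have hb := S3 h2
    intro hiff; exact hb (hiff.mp ha)
  have C4 : p + 1 < m → (cA g (p+1) ↔ sA f p) := by
    intro h; unfold cA
    rw [Nat.add_sub_cancel, S4 (p+1) (by omega), Nat.add_sub_cancel]
    have hb := S3 (by omega)
    constructor
    · intro hn; by_contra hs; exact hn (iff_of_false hb hs)
    · intro hs hiff; exact hb (hiff.mpr hs)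
  have C5 : ∀ i, p + 1 < i → (cA g i ↔ cA f (i-1)) := by
    intro i h; unfold cA
    rw [S4 (i-1) (by omega), S4 i (by omega), show i - 1 - 1 = i - 1 - 1 from rfl]
  -- sums
  have cardf : ∀ (q : ℕ → Prop) [DecidablePred q] (a b : ℕ),
      ((Finset.Ico a b).filter q).card = ∑ i ∈ Finset.Ico a b, if q i then 1 else 0 := by
    intro q _ a b; rw [Finset.card_filter]
  have top_split : ∀ (F : ℕ → ℕ) (a b : ℕ), a ≤ b →
      ∑ i ∈ Finset.Ico a (b+1), F i = ∑ i ∈ Finset.Ico a b, F i + F b :=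
    fun F a b h => Finset.sum_Ico_succ_top h F
  rw [chgCnt, chgCnt, cardf, cardf]
  rcases Nat.eq_zero_or_pos p with rfl | hp1
  · -- p = 0
    have h2 : ¬ cond2 f m 0 := by
      unfold cond2; rintro (⟨h,-⟩|⟨h,-⟩) <;> omega
    have h1 : cond1 f m 0 ↔ sA f 0 := by
      unfold cond1; constructor
      · rintro (⟨-,h⟩|⟨h,-⟩|⟨h,-⟩|⟨h,-⟩) <;> first | exact h | omega
      · intro h; exact Or.inl ⟨rfl, h⟩
    have hD : D f m 0 = if sA f 0 then 1 else 0 := by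
      rw [D, if_neg h2]
      by_cases hs : sA f 0
      · rw [if_pos (h1.mpr hs), if_pos hs]
      · rw [if_neg (fun hc => hs (h1.mp hc)), if_neg hs]
    rw [hD]
    rw [Finset.sum_eq_sum_Ico_succ_bot (by omega : 1 < m)]
    have hre : ∑ i ∈ Finset.Ico (1+1) m, (if cA g i then 1 else 0)
        = ∑ i ∈ Finset.Ico 1 (m-1), (if cA g (i+1) then 1 else 0) := by
      have := reindex (fun i => if cA g i then 1 else 0) 1 (m-1)
      rw [show m-1+1 = m by omega] at this; exact this
    rw [hre]
    have hterm : ∑ i ∈ Finset.Ico 1 (m-1), (if cA g (i+1) then 1 else 0)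
        = ∑ i ∈ Finset.Ico 1 (m-1), (if cA f i then 1 else 0) := by
      refine Finset.sum_congr rfl (fun i hi => ?_)
      simp only [Finset.mem_Ico] at hi
      have h5 := C5 (i+1) (by omega)
      rw [Nat.add_sub_cancel] at h5
      simp only [h5]
    rw [hterm]
    have h1g : cA g (0+1) ↔ sA f 0 := C4 (by omega)
    simp only [h1g]
    omega
  rcases eq_or_lt_of_le hp with rfl | hpm
  · -- p = m
    have h2 : ¬ cond2 f p p := by
      unfold cond2; rintro (⟨-,h,-⟩|⟨-,h,-⟩) <;> omega
    have h1 : cond1 f p p ↔ ¬ sA f (p-2) := by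
      unfold cond1; constructor
      · rintro (⟨h,-⟩|⟨h,-⟩|⟨-,h⟩|⟨h,-⟩) <;> first | exact h | omega
      · intro h; exact Or.inr (Or.inr (Or.inl ⟨rfl, h⟩))
    have hD : D f p p = if ¬ sA f (p-2) then 1 else 0 := by
      rw [D, if_neg h2]
      by_cases hs : ¬ sA f (p-2)
      · rw [if_pos (h1.mpr hs), if_pos hs]
      · rw [if_neg (fun hc => hs (h1.mp hc)), if_neg hs]
    rw [hD]
    have htop : ∑ i ∈ Finset.Ico 1 p, (if cA g i then 1 else 0)
        = ∑ i ∈ Finset.Ico 1 (p-1), (if cA g i then 1 else 0) + (if cA g (p-1) then 1 else 0) := by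
      have := top_split (fun i => if cA g i then 1 else 0) 1 (p-1) (by omega)
      rw [show p-1+1 = p by omega] at this; exact this
    rw [htop]
    have hterm : ∑ i ∈ Finset.Ico 1 (p-1), (if cA g i then 1 else 0)
        = ∑ i ∈ Finset.Ico 1 (p-1), (if cA f i then 1 else 0) := by
      refine Finset.sum_congr rfl (fun i hi => ?_)
      simp only [Finset.mem_Ico] at hi
      simp only [C1 i (by omega) (by omega)]
    rw [hterm]
    simp only [C2 (by omega : 2 ≤ p)]
  · -- 1 ≤ p < m
    -- NEW side decomposition
    have hsplitN : ∑ i ∈ Finset.Ico 1 m, (if cA g i then 1 else 0)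
        = ∑ i ∈ Finset.Ico 1 p, (if cA g i then 1 else 0)
          + ∑ i ∈ Finset.Ico p m, (if cA g i then 1 else 0) :=
      (Finset.sum_Ico_consecutive _ (by omega) (by omega)).symm
    have hbotN : ∑ i ∈ Finset.Ico p m, (if cA g i then 1 else 0)
        = (if cA g p then 1 else 0) + ∑ i ∈ Finset.Ico (p+1) m, (if cA g i then 1 else 0) :=
      Finset.sum_eq_sum_Ico_succ_bot (by omega) _
    have hreN : ∑ i ∈ Finset.Ico (p+1) m, (if cA g i then 1 else 0)
        = ∑ i ∈ Finset.Ico p (m-1), (if cA g (i+1) then 1 else 0) := by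
      have := reindex (fun i => if cA g i then 1 else 0) p (m-1)
      rw [show m-1+1 = m by omega] at this; exact this
    have hgp : (if cA g p then 1 else 0) = 1 := by
      simp only [if_pos (C3 hp1 hpm)]
    -- OLD side decomposition
    have hsplitO : ∑ i ∈ Finset.Ico 1 (m-1), (if cA f i then 1 else 0)
        = ∑ i ∈ Finset.Ico 1 p, (if cA f i then 1 else 0)
          + ∑ i ∈ Finset.Ico p (m-1), (if cA f i then 1 else 0) :=
      (Finset.sum_Ico_consecutive _ (by omega) (by omega)).symm
    rw [hsplitN, hbotN, hreN, hgp, hsplitO]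
    by_cases hP2 : 2 ≤ p
    · -- left: split at p-1
      have hLG : ∑ i ∈ Finset.Ico 1 p, (if cA g i then 1 else 0)
          = ∑ i ∈ Finset.Ico 1 (p-1), (if cA f i then 1 else 0) + (if cA g (p-1) then 1 else 0) := by
        have h := top_split (fun i => if cA g i then 1 else 0) 1 (p-1) (by omega)
        rw [show p-1+1 = p by omega] at h
        rw [h]
        congr 1
        refine Finset.sum_congr rfl (fun i hi => ?_)
        simp only [Finset.mem_Ico] at hi
        simp only [C1 i (by omega) (by omega)]
      have hLF : ∑ i ∈ Finset.Ico 1 p, (if cA f i then 1 else 0)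
          = ∑ i ∈ Finset.Ico 1 (p-1), (if cA f i then 1 else 0) + (if cA f (p-1) then 1 else 0) := by
        have h := top_split (fun i => if cA f i then 1 else 0) 1 (p-1) (by omega)
        rw [show p-1+1 = p by omega] at h
        exact h
      rw [hLG, hLF]
      simp only [C2 hP2]
      by_cases hPM : p + 1 < m
      · -- interior
        have hRG : ∑ i ∈ Finset.Ico p (m-1), (if cA g (i+1) then 1 else 0)
            = (if cA g (p+1) then 1 else 0) + ∑ i ∈ Finset.Ico (p+1) (m-1), (if cA f i then 1 else 0) := by
          rw [Finset.sum_eq_sum_Ico_succ_bot (by omega : p < m - 1)]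
          congr 1
          refine Finset.sum_congr rfl (fun i hi => ?_)
          simp only [Finset.mem_Ico] at hi
          have h5 := C5 (i+1) (by omega)
          rw [Nat.add_sub_cancel] at h5
          simp only [h5]
        have hRF : ∑ i ∈ Finset.Ico p (m-1), (if cA f i then 1 else 0)
            = (if cA f p then 1 else 0) + ∑ i ∈ Finset.Ico (p+1) (m-1), (if cA f i then 1 else 0) :=
          Finset.sum_eq_sum_Ico_succ_bot (by omega) _
        rw [hRG, hRF]
        simp only [C4 hPM]
        have hD : D f m p = if (sA f (p-1) ∧ sA f p) ∨ (¬ sA f (p-2) ∧ ¬ sA f (p-1)) then 2 else 0 := by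
          rw [D]
          have hc1 : ¬ cond1 f m p := by
            unfold cond1; rintro (⟨h,-⟩|⟨h,-⟩|⟨h,-⟩|⟨h,-⟩) <;> omega
          have hc2 : cond2 f m p ↔ (sA f (p-1) ∧ sA f p) ∨ (¬ sA f (p-2) ∧ ¬ sA f (p-1)) := by
            unfold cond2; constructor
            · rintro (⟨-,-,h1,h2⟩|⟨-,-,h1,h2⟩)
              · exact Or.inl ⟨h1, h2⟩
              · exact Or.inr ⟨h1, h2⟩
            · rintro (⟨h1,h2⟩|⟨h1,h2⟩)
              · exact Or.inl ⟨by omega, by omega, h1, h2⟩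
              · exact Or.inr ⟨by omega, by omega, h1, h2⟩
          by_cases hx : (sA f (p-1) ∧ sA f p) ∨ (¬ sA f (p-2) ∧ ¬ sA f (p-1))
          · rw [if_pos (hc2.mpr hx), if_pos hx]
          · rw [if_neg (fun hc => hx (hc2.mp hc)), if_neg hc1, if_neg hx]
        rw [hD]
        have e1 : cA f (p-1) ↔ ¬ (sA f (p-2) ↔ sA f (p-1)) := by
          unfold cA; rw [show p-1-1 = p-2 by omega]
        have e2 : cA f p ↔ ¬ (sA f (p-1) ↔ sA f p) := Iff.rfl
        simp only [e1, e2]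
        by_cases h1 : sA f (p-2) <;> by_cases h2 : sA f (p-1) <;> by_cases h3 : sA f p <;>
          simp [h1, h2, h3] <;> omega
      · -- p = m - 1
        have hpm1 : p = m - 1 := by omega
        have hRG : ∑ i ∈ Finset.Ico p (m-1), (if cA g (i+1) then 1 else 0) = 0 := by
          rw [hpm1, Finset.Ico_self, Finset.sum_empty]
        have hRF : ∑ i ∈ Finset.Ico p (m-1), (if cA f i then 1 else 0) = 0 := by
          rw [hpm1, Finset.Ico_self, Finset.sum_empty]
        rw [hRG, hRF]
        have hD : D f m p = if (¬ sA f (p-2) ∧ ¬ sA f (p-1)) then 2 else if sA f (p-1) then 1 else 0 := by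
          rw [D]
          have hc1 : cond1 f m p ↔ sA f (p-1) := by
            unfold cond1; constructor
            · rintro (⟨h,-⟩|⟨h,-⟩|⟨h,-⟩|⟨-,h⟩) <;> first | (rw [show m-2 = p-1 by omega] at h; exact h) | omega
            · intro h; exact Or.inr (Or.inr (Or.inr ⟨by omega, by rw [show m-2 = p-1 by omega]; exact h⟩))
          have hc2 : cond2 f m p ↔ (¬ sA f (p-2) ∧ ¬ sA f (p-1)) := by
            unfold cond2; constructor
            · rintro (⟨-,h,-⟩|⟨-,-,h1,h2⟩)
              · omega
              · exact ⟨h1, h2⟩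
            · rintro ⟨h1,h2⟩; exact Or.inr ⟨by omega, by omega, h1, h2⟩
          by_cases hx : (¬ sA f (p-2) ∧ ¬ sA f (p-1))
          · rw [if_pos (hc2.mpr hx), if_pos hx]
          · rw [if_neg (fun hc => hx (hc2.mp hc)), if_neg hx]
            by_cases hy : sA f (p-1)
            · rw [if_pos (hc1.mpr hy), if_pos hy]
            · rw [if_neg (fun hc => hy (hc1.mp hc)), if_neg hy]
        rw [hD]
        have e1 : cA f (p-1) ↔ ¬ (sA f (p-2) ↔ sA f (p-1)) := by
          unfold cA; rw [show p-1-1 = p-2 by omega]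
        simp only [e1]
        by_cases h1 : sA f (p-2) <;> by_cases h2 : sA f (p-1) <;>
          simp [h1, h2] <;> omega
    · -- p = 1
      have hp1' : p = 1 := by omega
      subst hp1'
      have hLG : ∑ i ∈ Finset.Ico 1 1, (if cA g i then 1 else 0) = 0 := by simp
      have hLF : ∑ i ∈ Finset.Ico 1 1, (if cA f i then 1 else 0) = 0 := by simp
      rw [hLG, hLF]
      by_cases hPM : 1 + 1 < m
      · have hRG : ∑ i ∈ Finset.Ico 1 (m-1), (if cA g (i+1) then 1 else 0)
            = (if cA g 2 then 1 else 0) + ∑ i ∈ Finset.Ico 2 (m-1), (if cA f i then 1 else 0) := by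
          rw [Finset.sum_eq_sum_Ico_succ_bot (by omega : 1 < m - 1)]
          congr 1
          refine Finset.sum_congr rfl (fun i hi => ?_)
          simp only [Finset.mem_Ico] at hi
          have h5 := C5 (i+1) (by omega)
          rw [Nat.add_sub_cancel] at h5
          simp only [h5]
        have hRF : ∑ i ∈ Finset.Ico 1 (m-1), (if cA f i then 1 else 0)
            = (if cA f 1 then 1 else 0) + ∑ i ∈ Finset.Ico 2 (m-1), (if cA f i then 1 else 0) :=
          Finset.sum_eq_sum_Ico_succ_bot (by omega) _
        rw [hRG, hRF]
        have h4 := C4 hPM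
        simp only [show (1:ℕ) + 1 = 2 from rfl] at h4
        simp only [h4]
        have hD : D f m 1 = if (sA f 0 ∧ sA f 1) then 2 else if ¬ sA f 0 then 1 else 0 := by
          rw [D]
          have hc1 : cond1 f m 1 ↔ ¬ sA f 0 := by
            unfold cond1; constructor
            · rintro (⟨h,-⟩|⟨-,h⟩|⟨h,-⟩|⟨h,-⟩) <;> first | exact h | omega
            · intro h; exact Or.inr (Or.inl ⟨rfl, h⟩)
          have hc2 : cond2 f m 1 ↔ (sA f 0 ∧ sA f 1) := by
            unfold cond2; constructor
            · rintro (⟨-,-,h1,h2⟩|⟨h,-⟩)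
              · exact ⟨h1, h2⟩
              · omega
            · rintro ⟨h1,h2⟩; exact Or.inl ⟨le_refl 1, by omega, h1, h2⟩
          by_cases hx : (sA f 0 ∧ sA f 1)
          · rw [if_pos (hc2.mpr hx), if_pos hx]
          · rw [if_neg (fun hc => hx (hc2.mp hc)), if_neg hx]
            by_cases hy : ¬ sA f 0
            · rw [if_pos (hc1.mpr hy), if_pos hy]
            · rw [if_neg (fun hc => hy (hc1.mp hc)), if_neg hy]
        rw [hD]
        have e2 : cA f 1 ↔ ¬ (sA f 0 ↔ sA f 1) := Iff.rfl
        simp only [e2]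
        by_cases h1 : sA f 0 <;> by_cases h2 : sA f 1 <;>
          simp [h1, h2] <;> omega
      · -- m = 2, p = 1
        have hm2 : m = 2 := by omega
        subst hm2
        have hRG : ∑ i ∈ Finset.Ico 1 (2-1), (if cA g (i+1) then 1 else 0) = 0 := by simp
        have hRF : ∑ i ∈ Finset.Ico 1 (2-1), (if cA f i then 1 else 0) = 0 := by simp
        rw [hRG, hRF]
        have hD : D f 2 1 = 1 := by
          rw [D]
          have hc2 : ¬ cond2 f 2 1 := by
            unfold cond2; rintro (⟨-,h,-⟩|⟨h,-⟩) <;> omega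
          rw [if_neg hc2]
          have hc1 : cond1 f 2 1 := by
            unfold cond1
            by_cases hs : sA f 0
            · exact Or.inr (Or.inr (Or.inr ⟨rfl, hs⟩))
            · exact Or.inr (Or.inl ⟨rfl, hs⟩)
          rw [if_pos hc1]
        rw [hD]

lemma count_D1 (f : ℕ → ℕ) (m : ℕ) (hm : 2 ≤ m) :
    ((Finset.range (m+1)).filter (fun p => D f m p = 1)).card = 2 := by
  set L : ℕ := if sA f 0 then 0 else 1 with hL
  set Rt : ℕ := if sA f (m-2) then m-1 else m with hRt
  have hDL : D f m L = 1 := by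
    rw [D]
    by_cases hs : sA f 0
    · rw [hL, if_pos hs]
      rw [if_neg (by unfold cond2; rintro (⟨h,-⟩|⟨h,-⟩) <;> omega)]
      rw [if_pos (show cond1 f m 0 from Or.inl ⟨rfl, hs⟩)]
    · rw [hL, if_neg hs]
      rw [if_neg (by unfold cond2; rintro (⟨-,-,h,-⟩|⟨h,-⟩) <;> first | exact hs h | omega)]
      exact if_pos (show cond1 f m 1 from Or.inr (Or.inl ⟨rfl, hs⟩))
  have hDRt : D f m Rt = 1 := by
    rw [D]
    by_cases hs : sA f (m-2)
    · rw [hRt, if_pos hs]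
      rw [if_neg (by
        unfold cond2
        rintro (⟨-,h,-⟩|⟨-,-,-,h⟩)
        · omega
        · rw [show m-1-1 = m-2 by omega] at h; exact h hs)]
      rw [if_pos (show cond1 f m (m-1) from Or.inr (Or.inr (Or.inr ⟨rfl, hs⟩)))]
    · rw [hRt, if_neg hs]
      rw [if_neg (by unfold cond2; rintro (⟨-,h,-⟩|⟨-,h,-⟩) <;> omega)]
      rw [if_pos (show cond1 f m m from Or.inr (Or.inr (Or.inl ⟨rfl, hs⟩)))]
  have hset : (Finset.range (m+1)).filter (fun p => D f m p = 1) = {L, Rt} := by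
    ext p
    simp only [Finset.mem_filter, Finset.mem_range, Finset.mem_insert, Finset.mem_singleton]
    constructor
    · rintro ⟨hp, hD⟩
      have hc1 : cond1 f m p := by
        by_contra hc
        by_cases hA : cond2 f m p
        · rw [D, if_pos hA] at hD; omega
        · rw [D, if_neg hA, if_neg hc] at hD; omega
      rcases hc1 with ⟨rfl, hs⟩|⟨rfl, hs⟩|⟨rfl, hs⟩|⟨rfl, hs⟩
      · left; rw [hL, if_pos hs]
      · left; rw [hL, if_neg hs]
      · right; rw [hRt, if_neg hs]
      · right; rw [hRt, if_pos hs]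
    · rintro (rfl | rfl)
      · refine ⟨?_, hDL⟩
        have : L ≤ 1 := by rw [hL]; split <;> omega
        omega
      · refine ⟨?_, hDRt⟩
        have : Rt ≤ m := by rw [hRt]; split <;> omega
        omega
  rw [hset]
  have hne : L ≠ Rt := by
    rcases Nat.lt_or_ge m 3 with h3 | h3
    · have hm2 : m = 2 := by omega
      subst hm2
      by_cases hs : sA f 0 <;> simp [hL, hRt, hs]
    · rw [hL, hRt]; split <;> split <;> omega
  rw [Finset.card_insert_of_notMem (by simpa using hne), Finset.card_singleton]

lemma count_D2 (f : ℕ → ℕ) (m : ℕ) (hm : 2 ≤ m) :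
    ((Finset.range (m+1)).filter (fun p => D f m p = 2)).card
      = ((Finset.Ico 1 (m-1)).filter (fun t => ¬ cA f t)).card := by
  have hd2 : ∀ p, D f m p = 2 ↔ cond2 f m p := by
    intro p; rw [D]; split_ifs with h1 h2 <;> simp [h1] <;> try simp [h2]
  refine Finset.card_nbij' (fun p => if sA f (p-1) then p else p-1)
    (fun t => if sA f t then t else t+1) ?_ ?_ ?_ ?_
  · intro p hp
    dsimp only
    simp only [Finset.mem_coe, Finset.mem_filter, Finset.mem_range] at hp
    obtain ⟨hpm, hD⟩ := hp
    rcases (hd2 p).mp hD with ⟨h1, h2, hs1, hs2⟩ | ⟨h1, h2, hn2, hn1⟩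
    · rw [if_pos hs1]
      simp only [Finset.mem_coe, Finset.mem_filter, Finset.mem_Ico]
      refine ⟨⟨h1, by omega⟩, ?_⟩
      unfold cA
      intro hc; exact hc (iff_of_true hs1 hs2)
    · rw [if_neg hn1]
      simp only [Finset.mem_coe, Finset.mem_filter, Finset.mem_Ico]
      refine ⟨⟨by omega, by omega⟩, ?_⟩
      unfold cA
      rw [show p-1-1 = p-2 by omega]
      intro hc; exact hc (iff_of_false hn2 hn1)
  · intro t ht
    dsimp only
    simp only [Finset.mem_coe, Finset.mem_filter, Finset.mem_Ico] at ht
    obtain ⟨⟨ht1, ht2⟩, hnc⟩ := ht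
    unfold cA at hnc
    rw [not_not] at hnc
    by_cases hs : sA f t
    · rw [if_pos hs]
      simp only [Finset.mem_coe, Finset.mem_filter, Finset.mem_range]
      exact ⟨by omega, (hd2 t).mpr (Or.inl ⟨ht1, by omega, hnc.mpr hs, hs⟩)⟩
    · rw [if_neg hs]
      simp only [Finset.mem_coe, Finset.mem_filter, Finset.mem_range]
      refine ⟨by omega, (hd2 (t+1)).mpr (Or.inr ⟨by omega, by omega, ?_, ?_⟩)⟩
      · rw [show t+1-2 = t-1 by omega]
        intro h; exact hs (hnc.mp h)
      · rw [Nat.add_sub_cancel]; exact hs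
  · intro p hp
    dsimp only
    simp only [Finset.mem_coe, Finset.mem_filter, Finset.mem_range] at hp
    obtain ⟨hpm, hD⟩ := hp
    rcases (hd2 p).mp hD with ⟨h1, h2, hs1, hs2⟩ | ⟨h1, h2, hn2, hn1⟩
    · rw [if_pos hs1, if_pos hs2]
    · rw [if_neg hn1, if_neg hn1]; omega
  · intro t ht
    dsimp only
    simp only [Finset.mem_coe, Finset.mem_filter, Finset.mem_Ico] at ht
    obtain ⟨⟨ht1, ht2⟩, hnc⟩ := ht
    unfold cA at hnc
    rw [not_not] at hnc
    by_cases hs : sA f t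
    · rw [if_pos hs, if_pos (hnc.mpr hs)]
    · rw [if_neg hs, Nat.add_sub_cancel, if_neg hs]

lemma D_cases (f : ℕ → ℕ) (m p : ℕ) : D f m p = 0 ∨ D f m p = 1 ∨ D f m p = 2 := by
  rw [D]; split_ifs <;> omega

lemma count_D_all (f : ℕ → ℕ) (m : ℕ) (hm : 2 ≤ m) (j : ℕ) :
    ((Finset.range (m+1)).filter (fun p => (1 + chgCnt f (m-1)) + D f m p = j)).card
      = (if j = 1 + chgCnt f (m-1) then 1 + chgCnt f (m-1)
         else if j = (1 + chgCnt f (m-1)) + 1 then 2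
         else if j = (1 + chgCnt f (m-1)) + 2 then m - 1 - (1 + chgCnt f (m-1)) else 0) := by
  set c := chgCnt f (m-1) with hc
  have hc_le : c ≤ m - 2 := by
    have h1 : c ≤ (Finset.Ico 1 (m-1)).card := Finset.card_filter_le _ _
    rw [Nat.card_Ico] at h1
    omega
  have hEq : ((Finset.Ico 1 (m-1)).filter (fun t => ¬ cA f t)).card = m - 2 - c := by
    have h := Finset.card_filter_add_card_filter_not
      (s := Finset.Ico 1 (m-1)) (p := fun i => cA f i)
    rw [Nat.card_Ico] at h
    have : ((Finset.Ico 1 (m-1)).filter (fun i => cA f i)).card = c := rfl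
    omega
  have h1 := count_D1 f m hm
  have h2 := count_D2 f m hm
  rw [hEq] at h2
  have h0 : ((Finset.range (m+1)).filter (fun p => D f m p = 0)).card = 1 + c := by
    have ha := Finset.card_filter_add_card_filter_not
      (s := Finset.range (m+1)) (p := fun p => D f m p = 0)
    have hb : (Finset.range (m+1)).filter (fun p => ¬ D f m p = 0)
        = ((Finset.range (m+1)).filter (fun p => D f m p = 1))
          ∪ ((Finset.range (m+1)).filter (fun p => D f m p = 2)) := by
      rw [← Finset.filter_or]
      apply Finset.filter_congr
      intro p _
      have := D_cases f m p
      constructor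
      · intro h; omega
      · intro h; omega
    have hdisj : Disjoint ((Finset.range (m+1)).filter (fun p => D f m p = 1))
        ((Finset.range (m+1)).filter (fun p => D f m p = 2)) := by
      rw [Finset.disjoint_left]
      intro a ha hb'
      simp only [Finset.mem_filter] at ha hb'
      omega
    rw [hb, Finset.card_union_of_disjoint hdisj, h1, h2] at ha
    rw [Finset.card_range] at ha
    omega
  by_cases hj1 : j = 1 + c
  · rw [if_pos hj1]
    have : (Finset.range (m+1)).filter (fun p => (1 + c) + D f m p = j)
        = (Finset.range (m+1)).filter (fun p => D f m p = 0) := by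
      apply Finset.filter_congr; intro p _; omega
    rw [this, h0]
  · rw [if_neg hj1]
    by_cases hj2 : j = (1 + c) + 1
    · rw [if_pos hj2]
      have : (Finset.range (m+1)).filter (fun p => (1 + c) + D f m p = j)
          = (Finset.range (m+1)).filter (fun p => D f m p = 1) := by
        apply Finset.filter_congr; intro p _; omega
      rw [this, h1]
    · rw [if_neg hj2]
      by_cases hj3 : j = (1 + c) + 2
      · rw [if_pos hj3]
        have : (Finset.range (m+1)).filter (fun p => (1 + c) + D f m p = j)
            = (Finset.range (m+1)).filter (fun p => D f m p = 2) := by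
          apply Finset.filter_congr; intro p _; omega
        rw [this, h2]
        omega
      · rw [if_neg hj3]
        rw [Finset.filter_false_of_mem, Finset.card_empty]
        intro p _
        have := D_cases f m p
        omega

-- ## Fin side

lemma permVal_lt {N : ℕ} (π : Equiv.Perm (Fin N)) {j : ℕ} (h : j < N) : permVal π j < N := by
  rw [permVal]; rw [dif_pos h]; exact (π ⟨j, h⟩).isLt

lemma permVal_inj {N : ℕ} (π : Equiv.Perm (Fin N)) {a b : ℕ} (ha : a < N) (hb : b < N)
    (h : permVal π a = permVal π b) : a = b := by
  rw [permVal, permVal, dif_pos ha, dif_pos hb] at h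
  have := π.injective (Fin.val_injective h)
  exact congrArg Fin.val this

lemma runs_eq_chg {N : ℕ} (hN : 2 ≤ N) (π : Equiv.Perm (Fin N)) :
    runs N π = 1 + chgCnt (permVal π) (N-1) := by
  rw [runs, if_neg (by omega)]
  congr 1
  rw [chgCnt]
  congr 1
  apply Finset.filter_congr
  intro i hi
  simp only [Finset.mem_Ico] at hi
  unfold cA sA
  rw [show i - 1 + 1 = i by omega]
  have d1 : permVal π (i-1) ≠ permVal π i :=
    fun h => by have := permVal_inj π (by omega) (by omega) h; omega
  have d2 : permVal π i ≠ permVal π (i+1) :=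
    fun h => by have := permVal_inj π (by omega) (by omega) h; omega
  constructor
  · intro h; omega
  · intro h; omega

lemma chgCnt_congr (f g : ℕ → ℕ) (L : ℕ) (h : ∀ j ≤ L, f j = g j) : chgCnt f L = chgCnt g L := by
  rw [chgCnt, chgCnt]
  congr 1
  apply Finset.filter_congr
  intro i hi
  simp only [Finset.mem_Ico] at hi
  unfold cA sA
  rw [h (i-1) (by omega), h (i-1+1) (by omega), h i (by omega), h (i+1) (by omega)]

lemma runs_le {N : ℕ} (hN : 2 ≤ N) (π : Equiv.Perm (Fin N)) : runs N π ≤ N - 1 := by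
  rw [runs_eq_chg hN]
  have h1 : chgCnt (permVal π) (N-1) ≤ (Finset.Ico 1 (N-1)).card := Finset.card_filter_le _ _
  rw [Nat.card_Ico] at h1
  omega

lemma R_eq_zero {N j : ℕ} (hN : 2 ≤ N) (hj : j = 0 ∨ N ≤ j) : R N j = 0 := by
  rw [R, Finset.filter_false_of_mem, Finset.card_empty]
  intro π _
  have h1 := runs_le hN π
  have h2 : 1 ≤ runs N π := by rw [runs_eq_chg hN]; omega
  omega

noncomputable def insPerm {m : ℕ} (σ : Equiv.Perm (Fin m)) (p : Fin (m+1)) : Equiv.Perm (Fin (m+1)) :=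
  Equiv.ofBijective (p.insertNth (Fin.last m) (fun i => (σ i).castSucc)) (by
    rw [Fintype.bijective_iff_injective_and_card]
    refine ⟨?_, rfl⟩
    intro a b hab
    rcases eq_or_ne a p with rfl | ha
    · rcases eq_or_ne b a with rfl | hb
      · rfl
      · obtain ⟨ib, rfl⟩ := Fin.exists_succAbove_eq hb
        rw [Fin.insertNth_apply_same, Fin.insertNth_apply_succAbove] at hab
        exact absurd hab.symm (Fin.ne_of_lt (Fin.castSucc_lt_last _))
    · obtain ⟨ia, rfl⟩ := Fin.exists_succAbove_eq ha
      rcases eq_or_ne b p with rfl | hb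
      · rw [Fin.insertNth_apply_same, Fin.insertNth_apply_succAbove] at hab
        exact absurd hab (Fin.ne_of_lt (Fin.castSucc_lt_last _))
      · obtain ⟨ib, rfl⟩ := Fin.exists_succAbove_eq hb
        rw [Fin.insertNth_apply_succAbove, Fin.insertNth_apply_succAbove] at hab
        have := σ.injective (Fin.castSucc_injective _ hab)
        rw [this])

lemma insPerm_apply {m : ℕ} (σ : Equiv.Perm (Fin m)) (p : Fin (m+1)) (x : Fin (m+1)) :
    insPerm σ p x = p.insertNth (α := fun _ => Fin (m+1)) (Fin.last m) (fun i => (σ i).castSucc) x := rfl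

lemma permVal_insPerm {m : ℕ} (σ : Equiv.Perm (Fin m)) (p : Fin (m+1)) (j : ℕ) (hj : j < m+1) :
    permVal (insPerm σ p) j = insf (permVal σ) (p : ℕ) m j := by
  rw [permVal, dif_pos hj, insPerm_apply, insf]
  rcases Nat.lt_trichotomy j (p : ℕ) with hlt | heq | hgt
  · rw [if_pos hlt]
    have hjm : j < m := by have := p.isLt; omega
    have hx : (⟨j, hj⟩ : Fin (m+1)) = p.succAbove ⟨j, hjm⟩ := by
      rw [Fin.succAbove_of_castSucc_lt]
      · rfl
      · rw [Fin.lt_def]; exact hlt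
    rw [hx, Fin.insertNth_apply_succAbove]
    rw [permVal, dif_pos hjm]
    rfl
  · rw [if_neg (by omega), if_pos heq]
    have hx : (⟨j, hj⟩ : Fin (m+1)) = p := by
      apply Fin.ext; exact heq
    rw [hx, Fin.insertNth_apply_same]
    rfl
  · rw [if_neg (by omega), if_neg (by omega)]
    have hj1m : j - 1 < m := by omega
    have hx : (⟨j, hj⟩ : Fin (m+1)) = p.succAbove ⟨j-1, hj1m⟩ := by
      rw [Fin.succAbove_of_le_castSucc]
      · apply Fin.ext; simp [Fin.val_succ]; omega
      · rw [Fin.le_def]; simp; omega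
    rw [hx, Fin.insertNth_apply_succAbove]
    rw [permVal, dif_pos hj1m]
    rfl

lemma runs_insPerm {m : ℕ} (hm : 2 ≤ m) (σ : Equiv.Perm (Fin m)) (p : Fin (m+1)) :
    runs (m+1) (insPerm σ p) = runs m σ + D (permVal σ) m (p : ℕ) := by
  rw [runs_eq_chg (by omega), runs_eq_chg hm]
  have h1 : chgCnt (permVal (insPerm σ p)) (m+1-1) = chgCnt (insf (permVal σ) (p : ℕ) m) m := by
    rw [show m+1-1 = m from rfl]
    apply chgCnt_congr
    intro j hjm
    exact permVal_insPerm σ p j (by omega)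
  rw [h1, chg_insf (permVal σ) m m hm (fun j hj => permVal_lt σ hj) (p : ℕ) (by have := p.isLt; omega)]
  omega

noncomputable def insEquiv (m : ℕ) : Equiv.Perm (Fin m) × Fin (m+1) ≃ Equiv.Perm (Fin (m+1)) :=
  Equiv.ofBijective (fun q => insPerm q.1 q.2) (by
    rw [Fintype.bijective_iff_injective_and_card]
    constructor
    · rintro ⟨σ, p⟩ ⟨σ', p'⟩ h
      simp only at h
      have hpp : p = p' := by
        by_contra hne
        obtain ⟨i, hi⟩ := Fin.exists_succAbove_eq hne
        have h1 : insPerm σ p p = Fin.last m := by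
          rw [insPerm_apply, Fin.insertNth_apply_same]
        have h2 : insPerm σ' p' p = (σ' i).castSucc := by
          rw [insPerm_apply, ← hi, Fin.insertNth_apply_succAbove]
        rw [h, h2] at h1
        exact absurd h1 (Fin.ne_of_lt (Fin.castSucc_lt_last _))
      subst hpp
      have hσ : σ = σ' := by
        apply Equiv.ext
        intro i
        have h1 : insPerm σ p (p.succAbove i) = (σ i).castSucc := by
          rw [insPerm_apply, Fin.insertNth_apply_succAbove]
        have h2 : insPerm σ' p (p.succAbove i) = (σ' i).castSucc := by
          rw [insPerm_apply, Fin.insertNth_apply_succAbove]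
        rw [h, h2] at h1
        exact Fin.castSucc_injective _ h1.symm
      rw [hσ]
    · rw [Fintype.card_prod, Fintype.card_perm, Fintype.card_perm, Fintype.card_fin,
        Fintype.card_fin, Nat.factorial_succ]
      ring)

lemma insEquiv_apply (m : ℕ) (q : Equiv.Perm (Fin m) × Fin (m+1)) :
    insEquiv m q = insPerm q.1 q.2 := rfl

lemma card_filter_equiv {α β : Type*} [Fintype α] [Fintype β] [DecidableEq α] [DecidableEq β]
    (e : α ≃ β) (P : β → Prop) [DecidablePred P] :
    (Finset.univ.filter (fun a => P (e a))).card = (Finset.univ.filter P).card := by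
  classical
  rw [← Fintype.card_subtype, ← Fintype.card_subtype]
  exact Fintype.card_congr (e.subtypeEquiv (fun a => Iff.rfl))

lemma card_filter_prod {α β : Type*} [Fintype α] [Fintype β] (P : α × β → Prop) [DecidablePred P] :
    (Finset.univ.filter P).card = ∑ a : α, (Finset.univ.filter (fun b => P (a, b))).card := by
  rw [Finset.card_filter, ← Finset.univ_product_univ, Finset.sum_product]
  exact Finset.sum_congr rfl (fun a _ => (Finset.card_filter _ _).symm)

lemma R_rec (m : ℕ) (hm : 2 ≤ m) (j : ℕ) :
    R (m+1) j = j * R m j + 2 * R m (j-1) + (m+1-j) * R m (j-2) := by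
  classical
  rw [R, ← card_filter_equiv (insEquiv m) (fun π => runs (m+1) π = j)]
  simp only [insEquiv_apply]
  erw [card_filter_prod (fun q : Equiv.Perm (Fin m) × Fin (m+1) => runs (m+1) (insPerm q.1 q.2) = j)]
  have hσ : ∀ σ : Equiv.Perm (Fin m),
      (Finset.univ.filter (fun p : Fin (m+1) => runs (m+1) (insPerm σ p) = j)).card
        = j * (if runs m σ = j then 1 else 0) + 2 * (if runs m σ = j-1 then 1 else 0)
          + (m+1-j) * (if runs m σ = j-2 then 1 else 0) := by
    intro σ
    have hiff : ∀ p : Fin (m+1), (runs (m+1) (insPerm σ p) = j)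
        ↔ ((1 + chgCnt (permVal σ) (m-1)) + D (permVal σ) m (p : ℕ) = j) := by
      intro p
      rw [runs_insPerm hm σ p, runs_eq_chg hm σ]
    have hcard : (Finset.univ.filter (fun p : Fin (m+1) => runs (m+1) (insPerm σ p) = j)).card
        = ((Finset.range (m+1)).filter
            (fun p => (1 + chgCnt (permVal σ) (m-1)) + D (permVal σ) m p = j)).card := by
      rw [Finset.card_filter, Finset.card_filter]
      simp only [hiff]
      exact Fin.sum_univ_eq_sum_range
        (fun i => if (1 + chgCnt (permVal σ) (m-1)) + D (permVal σ) m i = j then 1 else 0) (m+1)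
    rw [hcard, count_D_all _ _ hm j]
    have hk : runs m σ = 1 + chgCnt (permVal σ) (m-1) := runs_eq_chg hm σ
    rw [← hk]
    have hk1 : 1 ≤ runs m σ := by omega
    by_cases e1 : j = runs m σ
    · rw [if_pos e1, if_pos (show runs m σ = j by omega),
        if_neg (show ¬ runs m σ = j - 1 by omega), if_neg (show ¬ runs m σ = j - 2 by omega)]
      omega
    · rw [if_neg e1]
      by_cases e2 : j = runs m σ + 1
      · rw [if_pos e2, if_neg (show ¬ runs m σ = j by omega),
          if_pos (show runs m σ = j - 1 by omega), if_neg (show ¬ runs m σ = j - 2 by omega)]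
        omega
      · rw [if_neg e2]
        by_cases e3 : j = runs m σ + 2
        · rw [if_pos e3, if_neg (show ¬ runs m σ = j by omega),
            if_neg (show ¬ runs m σ = j - 1 by omega), if_pos (show runs m σ = j - 2 by omega)]
          omega
        · rw [if_neg e3, if_neg (show ¬ runs m σ = j by omega),
            if_neg (show ¬ runs m σ = j - 1 by omega), if_neg (show ¬ runs m σ = j - 2 by omega)]
          omega
  rw [Finset.sum_congr rfl (fun σ _ => hσ σ)]
  rw [Finset.sum_add_distrib, Finset.sum_add_distrib, ← Finset.mul_sum, ← Finset.mul_sum,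
    ← Finset.mul_sum]
  have hR : ∀ t : ℕ, ∑ σ : Equiv.Perm (Fin m), (if runs m σ = t then 1 else 0) = R m t := by
    intro t
    rw [R, Finset.card_filter]
  rw [hR, hR, hR]

lemma R_1_0 : R 1 0 = 1 := by
  rw [R, Finset.filter_true_of_mem (fun π _ => by rw [runs, if_pos (le_refl 1)]),
    Finset.card_univ, Fintype.card_perm, Fintype.card_fin]
  rfl

lemma R_1_pos {j : ℕ} (hj : 1 ≤ j) : R 1 j = 0 := by
  rw [R, Finset.filter_false_of_mem, Finset.card_empty]
  intro π _
  rw [runs, if_pos (le_refl 1)]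
  omega

lemma runs_two (π : Equiv.Perm (Fin 2)) : runs 2 π = 1 := by
  rw [runs, if_neg (by omega)]
  simp

lemma R_2_1 : R 2 1 = 2 := by
  rw [R, Finset.filter_true_of_mem (fun π _ => runs_two π),
    Finset.card_univ, Fintype.card_perm, Fintype.card_fin]
  rfl

lemma coeff_Rpoly (N : ℕ) (hN : 1 ≤ N) (j : ℕ) : (Rpoly N).coeff j = (R N j : ℝ) := by
  rw [Rpoly, Polynomial.finset_sum_coeff]
  simp only [Polynomial.coeff_C_mul, Polynomial.coeff_X_pow, mul_ite, mul_one, mul_zero]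
  rw [Finset.sum_ite_eq (Finset.range N) j (fun k => ((R N k : ℝ)))]
  by_cases hj : j ∈ Finset.range N
  · rw [if_pos hj]
  · rw [if_neg hj]
    simp only [Finset.mem_range, not_lt] at hj
    rcases Nat.lt_or_ge N 2 with h2 | h2
    · have hN1 : N = 1 := by omega
      subst hN1
      rw [R_1_pos (by omega)]
      norm_num
    · rw [R_eq_zero h2 (Or.inr hj)]
      norm_num

lemma Rpoly_one : Rpoly 1 = 1 := by
  rw [Rpoly]
  rw [Finset.sum_range_one, R_1_0]
  simp

lemma R_2_0 : R 2 0 = 0 := by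
  rw [R, Finset.filter_false_of_mem, Finset.card_empty]
  intro π _
  rw [runs_two π]
  omega

lemma Rpoly_two : Rpoly 2 = 2 * Polynomial.X := by
  rw [Rpoly]
  rw [Finset.sum_range_succ, Finset.sum_range_one, R_2_0, R_2_1]
  push_cast
  simp only [pow_zero, pow_one, mul_one, map_zero, zero_add, map_ofNat]

end RunsAux

open RunsAux

/-- The recurrence `R_{n+2}(x) = x(nx+2)R_{n+1}(x) + x(1-x²)R_{n+1}'(x)`,
with `R_1(x) = 1` and `R_2(x) = 2x`. -/
theorem Rpoly_recurrence :
    (∀ n : ℕ,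
      Rpoly (n + 2) =
        Polynomial.X * (Polynomial.C (n : ℝ) * Polynomial.X + 2) * Rpoly (n + 1) +
          Polynomial.X * (1 - Polynomial.X ^ 2) * (Rpoly (n + 1)).derivative)
    ∧ Rpoly 1 = 1 ∧ Rpoly 2 = 2 * Polynomial.X := by
  refine ⟨?_, Rpoly_one, Rpoly_two⟩
  intro n
  rcases Nat.eq_zero_or_pos n with rfl | hn
  · rw [Rpoly_two, Rpoly_one]
    simp only [Polynomial.derivative_one, mul_zero, add_zero, mul_one, Nat.cast_zero, map_zero,
      zero_mul, zero_add]
    ring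
  · set Q := Rpoly (n+1) with hQdef
    have hfac : Polynomial.X * (Polynomial.C (n:ℝ) * Polynomial.X + 2) * Q
        + Polynomial.X * (1 - Polynomial.X^2) * Q.derivative
        = Polynomial.X * (Polynomial.C (n:ℝ) * (Polynomial.X * Q) + 2 * Q
            + Q.derivative - Polynomial.X * (Polynomial.X * Q.derivative)) := by
      ring
    rw [hfac]
    apply Polynomial.ext
    intro j
    rw [coeff_Rpoly (n+2) (by omega)]
    have hQ : ∀ t, Q.coeff t = (R (n+1) t : ℝ) := coeff_Rpoly (n+1) (by omega)
    have ederiv : ∀ t, (Q.derivative).coeff t = (R (n+1) (t+1) : ℝ) * (t+1) := by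
      intro t; rw [Polynomial.coeff_derivative, hQ]
    have hX0 : ∀ p : Polynomial ℝ, (Polynomial.X * p).coeff 0 = 0 := fun p => by
      rw [Polynomial.mul_coeff_zero, Polynomial.coeff_X_zero, zero_mul]
    have htwo : ∀ (p : Polynomial ℝ) t, ((2 : Polynomial ℝ) * p).coeff t = 2 * p.coeff t := by
      intro p t
      rw [show (2 : Polynomial ℝ) = Polynomial.C 2 from (map_ofNat Polynomial.C 2).symm,
        Polynomial.coeff_C_mul]
    have hrec := R_rec (n+1) (by omega) j
    rw [show n+1+1 = n+2 from rfl] at hrec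
    have h0 : R (n+1) 0 = 0 := R_eq_zero (by omega) (Or.inl rfl)
    rcases j with _ | d
    · simp [hX0, R_eq_zero (show (2:ℕ) ≤ n+2 by omega) (Or.inl rfl)]
    · rw [Polynomial.coeff_X_mul, Polynomial.coeff_sub, Polynomial.coeff_add,
        Polynomial.coeff_add, Polynomial.coeff_C_mul, htwo]
      rcases d with _ | d'
      · -- j = 1
        rw [hX0, hX0, ederiv, hQ]
        rw [h0] at hrec ⊢
        rw [show (0:ℕ)+1 = 1 from rfl]
        rw [hrec]
        push_cast
        ring
      · rw [Polynomial.coeff_X_mul, ederiv]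
        rcases d' with _ | d''
        · -- j = 2
          rw [Polynomial.coeff_X_mul, hX0, hQ, hQ]
          rw [show (2:ℕ)-1 = 1 from rfl, show (2:ℕ)-2 = 0 from rfl, h0] at hrec
          rw [show (0:ℕ)+1 = 1 from rfl]
          rw [h0]
          rw [hrec]
          push_cast
          ring
        · -- j = d'' + 3
          rw [Polynomial.coeff_X_mul, Polynomial.coeff_X_mul, ederiv, hQ, hQ]
          rw [show d''+1+1+1-1 = d''+1+1 by omega, show d''+1+1+1-2 = d''+1 by omega] at hrec
          by_cases hle : d''+1+1+1 ≤ n+2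
          · rw [hrec]
            push_cast
            rw [Nat.cast_sub (show d''+1 ≤ n by omega)]
            push_cast
            ring
          · have hz : R (n+1) (d''+1) = 0 := R_eq_zero (by omega) (Or.inr (by omega))
            rw [show n+2-(d''+1+1+1) = 0 by omega, hz] at hrec
            rw [hz]
            rw [hrec]
            push_cast
            ring
end

section
/- For n ≥ 1 and 0 ≤ k ≤ ⌊(n+1)/2⌋, the coefficient p(n, n-2k+1) of the derivative polynomial P_n satisfies p(n,n-2k+1) = Σ_{i ≥ 1} i!·S(n,i)·2^{n-i}·(-1)^{i-n+k}·[C(i, n-2k) - C(i, n-2k+1)]. -/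
open Polynomial Finset

namespace PExplicitAux

noncomputable def Bp (m : ℕ) : Polynomial ℂ :=
  (1 - C Complex.I * X) * (1 + C Complex.I * X) ^ m

lemma CI_sq : (C Complex.I : Polynomial ℂ) ^ 2 = -1 := by
  rw [← C_pow, Complex.I_sq]; simp

lemma stirling2_eq_zero : ∀ n m : ℕ, n < m → stirling2 n m = 0
  | 0, m+1, _ => rfl
  | n+1, m+1, h => by
    have h1 : n < m + 1 := by omega
    have h2 : n < m := by omega
    simp [stirling2, stirling2_eq_zero n (m+1) h1, stirling2_eq_zero n m h2]

lemma stirling2_zero : ∀ n : ℕ, 1 ≤ n → stirling2 n 0 = 0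
  | _+1, _ => rfl

noncomputable def cc (n m : ℕ) : ℂ :=
  (m.factorial : ℂ) * (stirling2 n m : ℂ) * 2 ^ (n - m) * Complex.I ^ (n + 1) * (-1) ^ m

lemma deriv_Bp (m : ℕ) :
    (1 + X ^ 2 : Polynomial ℂ) * derivative (Bp m) =
      C Complex.I * (C (2 * m : ℂ) * Bp m - C ((m : ℂ) + 1) * Bp (m + 1)) := by
  have h2 : (C Complex.I : Polynomial ℂ) ^ 2 = -1 := CI_sq
  have h3 : (C Complex.I : Polynomial ℂ) ^ 3 = -C Complex.I := by
    rw [pow_succ, h2]; ring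
  have h4 : (C Complex.I : Polynomial ℂ) ^ 4 = 1 := by
    rw [(by ring : (C Complex.I : Polynomial ℂ)^4 = ((C Complex.I)^2)^2), h2]; ring
  cases m with
  | zero =>
    simp only [Bp, pow_zero, mul_one, pow_one]
    simp only [derivative_sub, derivative_one, derivative_mul, derivative_C, derivative_X]
    simp only [Nat.cast_zero, map_add, map_mul, map_one, map_zero, C_eq_natCast, mul_zero]
    ring_nf
    simp only [h2, h3, h4]
    ring
  | succ s =>
    simp only [Bp, derivative_mul, derivative_pow, derivative_sub, derivative_one,
      derivative_add, derivative_C, derivative_X]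
    push_cast
    simp only [map_add, map_mul, map_one, map_zero, C_eq_natCast, map_ofNat]
    ring_nf
    simp only [h2, h3, h4]
    ring

lemma cc_rec (n m : ℕ) :
    cc (n + 1) m = Complex.I * (2 * m) * cc n m - Complex.I * m * cc n (m - 1) := by
  cases m with
  | zero => simp [cc, stirling2_zero, stirling2]
  | succ s =>
    simp only [cc, stirling2, Nat.succ_sub_one]
    rcases lt_or_ge s n with hs | hs
    · have e1 : n - s = n - (s + 1) + 1 := by omega
      have e2 : n + 1 - (s + 1) = n - (s + 1) + 1 := by omega
      rw [e1, e2]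
      push_cast [Nat.factorial_succ, pow_succ]
      ring
    · have z1 : stirling2 n (s + 1) = 0 := stirling2_eq_zero n (s+1) (by omega)
      rcases Nat.eq_or_lt_of_le hs with h | hs'
      · subst h
        simp only [z1, Nat.sub_self, Nat.succ_sub_one,
          (by omega : n + 1 - (n + 1) = 0)]
        push_cast [Nat.factorial_succ, pow_succ]
        ring
      · have z2 : stirling2 n s = 0 := stirling2_eq_zero n s (by omega)
        simp [z1, z2]

lemma P_eq (n : ℕ) (hn : 1 ≤ n) :
    (P n).map (algebraMap ℝ ℂ) = ∑ m ∈ Finset.range (n + 1), C (cc n m) * Bp m := by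
  induction n, hn using Nat.le_induction with
  | base =>
    have h1 : P 1 = 1 + X ^ 2 := by
      show (1 + X ^ 2) * derivative (P 0) = _
      show (1 + X ^ 2 : Polynomial ℝ) * derivative X = _
      simp
    rw [h1]
    have h0 : cc 1 0 = 0 := by simp [cc, stirling2_zero 1 le_rfl]
    have hs : stirling2 1 1 = 1 := rfl
    rw [Finset.sum_range_succ, Finset.sum_range_one, h0]
    simp only [map_zero, zero_mul, zero_add, cc, hs, Bp, pow_one]
    have h2 : (C Complex.I : Polynomial ℂ) ^ 2 = -1 := CI_sq
    push_cast
    simp only [Polynomial.map_add, Polynomial.map_one, Polynomial.map_pow, Polynomial.map_X]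
    simp only [Nat.factorial_one, Nat.sub_self, pow_zero, pow_one]
    rw [show ((1:ℕ):ℂ) * 1 * 1 * Complex.I ^ 2 * (-1) = 1 by
      rw [Complex.I_sq]; push_cast; ring]
    rw [map_one, one_mul]
    linear_combination (norm := ring) ((X^2 : Polynomial ℂ)) * h2
  | succ n hn ih =>
    have hmap : (P (n+1)).map (algebraMap ℝ ℂ) =
        (1 + X ^ 2) * derivative ((P n).map (algebraMap ℝ ℂ)) := by
      show ((1 + X ^ 2) * derivative (P n) : Polynomial ℝ).map _ = _
      rw [Polynomial.map_mul, derivative_map]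
      simp
    rw [hmap, ih, derivative_sum, Finset.mul_sum]
    have step : ∀ m ∈ Finset.range (n+1),
        (1 + X ^ 2 : Polynomial ℂ) * derivative (C (cc n m) * Bp m) =
          C (Complex.I * (2*m) * cc n m) * Bp m
            - C (Complex.I * ((m:ℂ)+1) * cc n m) * Bp (m+1) := by
      intro m _
      rw [derivative_C_mul]
      rw [show (1 + X ^ 2 : Polynomial ℂ) * (C (cc n m) * derivative (Bp m))
            = C (cc n m) * ((1 + X ^ 2) * derivative (Bp m)) by ring, deriv_Bp]
      simp only [map_mul]
      ring
    rw [Finset.sum_congr rfl step, Finset.sum_sub_distrib]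
    have htop : C (Complex.I * (2*(n+1 : ℕ)) * cc n (n+1)) * Bp (n+1) = 0 := by
      have : cc n (n+1) = 0 := by
        simp [cc, stirling2_eq_zero n (n+1) (by omega)]
      simp [this]
    have hfirst : ∑ m ∈ Finset.range (n+2), C (Complex.I * (2*m) * cc n m) * Bp m
        = ∑ m ∈ Finset.range (n+1), C (Complex.I * (2*m) * cc n m) * Bp m := by
      rw [Finset.sum_range_succ, htop, add_zero]
    have hsecond : ∑ m ∈ Finset.range (n+1), C (Complex.I * ((m:ℂ)+1) * cc n m) * Bp (m+1)
        = ∑ m ∈ Finset.range (n+2), C (Complex.I * (m:ℂ) * cc n (m-1)) * Bp m := by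
      rw [Finset.sum_range_succ' (fun m => C (Complex.I * (m:ℂ) * cc n (m-1)) * Bp m) (n+1)]
      simp only [Nat.cast_zero, mul_zero, zero_mul, map_zero, add_zero, Nat.add_sub_cancel]
      apply Finset.sum_congr rfl
      intro m _
      push_cast
      ring_nf
    rw [← hfirst, hsecond, ← Finset.sum_sub_distrib]
    apply Finset.sum_congr rfl
    intro m _
    rw [← sub_mul, ← map_sub, ← cc_rec]

lemma coeff_one_add (m j : ℕ) :
    ((1 + C Complex.I * X) ^ m).coeff j = Complex.I ^ j * (m.choose j : ℂ) := by
  induction m generalizing j with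
  | zero =>
    cases j with
    | zero => simp
    | succ j => simp [Polynomial.coeff_one, Nat.choose]
  | succ m ih =>
    rw [pow_succ, show ((1 + C Complex.I * X) ^ m) * (1 + C Complex.I * X)
        = (1 + C Complex.I * X) ^ m + C Complex.I * (X * (1 + C Complex.I * X) ^ m) by ring]
    cases j with
    | zero => simp [ih]
    | succ j =>
      rw [Polynomial.coeff_add, Polynomial.coeff_C_mul, Polynomial.coeff_X_mul, ih, ih,
        Nat.choose_succ_succ]
      push_cast
      ring

lemma coeff_Bp_zero (m : ℕ) : (Bp m).coeff 0 = 1 := by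
  rw [Bp, show (1 - C Complex.I * X) * (1 + C Complex.I * X) ^ m
      = (1 + C Complex.I * X) ^ m - C Complex.I * (X * (1 + C Complex.I * X) ^ m) by ring,
    Polynomial.coeff_sub, Polynomial.coeff_C_mul, coeff_one_add]
  simp

lemma coeff_Bp_succ (m j : ℕ) :
    (Bp m).coeff (j + 1) =
      Complex.I ^ (j + 1) * ((m.choose (j+1) : ℂ) - (m.choose j : ℂ)) := by
  rw [Bp, show (1 - C Complex.I * X) * (1 + C Complex.I * X) ^ m
      = (1 + C Complex.I * X) ^ m - C Complex.I * (X * (1 + C Complex.I * X) ^ m) by ring,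
    Polynomial.coeff_sub, Polynomial.coeff_C_mul, Polynomial.coeff_X_mul, coeff_one_add,
    coeff_one_add]
  ring

lemma neg_one_zpow_congr (a b : ℤ) (h : Even (a - b)) : (-1:ℂ)^a = (-1:ℂ)^b := by
  have hne : (-1:ℂ) ≠ 0 := by norm_num
  rw [show a = (a - b) + b by ring, zpow_add₀ hne, h.neg_one_zpow, one_mul]

lemma term_eq (n k m : ℕ) (hk : 2 * k ≤ n + 1) :
    cc n m * (Bp m).coeff (n + 1 - 2 * k) =
      ((m.factorial * stirling2 n m * 2 ^ (n - m) : ℕ) : ℂ) *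
        (-1 : ℂ) ^ ((m : ℤ) - (n : ℤ) + (k : ℤ)) *
        ((if 2 * k ≤ n then ((m.choose (n - 2 * k) : ℕ) : ℂ) else 0) -
          ((m.choose (n + 1 - 2 * k) : ℕ) : ℂ)) := by
  have hne : (-1:ℂ) ≠ 0 := by norm_num
  rcases le_or_gt (2 * k) n with h2k | h2k
  · rw [if_pos h2k, show n + 1 - 2 * k = (n - 2 * k) + 1 by omega, coeff_Bp_succ]
    rw [cc]
    have hI : Complex.I ^ (n + 1) * Complex.I ^ (n - 2 * k + 1) = (-1 : ℂ) ^ (n + 1 - k) := by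
      rw [← pow_add, show (n + 1) + (n - 2 * k + 1) = 2 * (n + 1 - k) by omega,
        pow_mul, Complex.I_sq]
    have hsign : (-1 : ℂ) ^ m * (-1 : ℂ) ^ (n + 1 - k) =
        -(-1 : ℂ) ^ ((m : ℤ) - (n : ℤ) + (k : ℤ)) := by
      rw [← zpow_natCast (-1:ℂ) m, ← zpow_natCast (-1:ℂ) (n + 1 - k),
        ← zpow_add₀ hne]
      have hc : ((n + 1 - k : ℕ) : ℤ) = (n : ℤ) + 1 - k := by omega
      rw [hc, neg_one_zpow_congr ((m:ℤ) + ((n:ℤ) + 1 - k)) ((m:ℤ) - (n:ℤ) + (k:ℤ) + 1)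
        ⟨(n:ℤ) - k, by ring⟩, zpow_add₀ hne, zpow_one]
      ring
    push_cast
    calc (m.factorial : ℂ) * (stirling2 n m : ℂ) * 2 ^ (n - m) * Complex.I ^ (n + 1) * (-1) ^ m *
          (Complex.I ^ (n - 2*k + 1) * ((m.choose (n - 2*k + 1) : ℂ) - (m.choose (n - 2*k) : ℂ)))
        = (m.factorial : ℂ) * (stirling2 n m : ℂ) * 2 ^ (n - m) *
            ((-1) ^ m * (Complex.I ^ (n + 1) * Complex.I ^ (n - 2*k + 1))) *
            ((m.choose (n - 2*k + 1) : ℂ) - (m.choose (n - 2*k) : ℂ)) := by ring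
      _ = _ := by
          rw [hI, hsign]
          ring
  · rw [if_neg (by omega), show n + 1 - 2 * k = 0 by omega, coeff_Bp_zero]
    have hn1 : n + 1 = 2 * k := by omega
    rw [cc, hn1, pow_mul, Complex.I_sq]
    have hsign : (-1 : ℂ) ^ m * (-1 : ℂ) ^ k = -(-1 : ℂ) ^ ((m : ℤ) - (n : ℤ) + (k : ℤ)) := by
      rw [← zpow_natCast (-1:ℂ) m, ← zpow_natCast (-1:ℂ) k, ← zpow_add₀ hne]
      have hnk : (n : ℤ) = 2 * k - 1 := by omega
      rw [neg_one_zpow_congr ((m:ℤ) + (k:ℤ)) ((m:ℤ) - (n:ℤ) + (k:ℤ) + 1)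
        ⟨(k:ℤ) - 1, by omega⟩, zpow_add₀ hne, zpow_one]
      ring
    push_cast
    calc (m.factorial : ℂ) * (stirling2 n m : ℂ) * 2 ^ (n - m) * (-1) ^ k * (-1) ^ m * 1
        = (m.factorial : ℂ) * (stirling2 n m : ℂ) * 2 ^ (n - m) * ((-1) ^ m * (-1) ^ k) := by ring
      _ = _ := by rw [hsign]; push_cast [Nat.choose_zero_right]; ring

end PExplicitAux

/-- Explicit formula for `p(n, n-2k+1)` in terms of Stirling numbers of the second kind.
(The sum over `i ≥ 1` is written over `1 ≤ i ≤ n`, all further terms vanishing since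
`S(n,i) = 0` for `i > n`; the binomial `C(i, n-2k)` is `0` when `n - 2k < 0`.) -/

theorem p_explicit (n : ℕ) (hn : 1 ≤ n) (k : ℕ) (hk : k ≤ (n + 1) / 2) :
    (P n).coeff (n + 1 - 2 * k) =
      ∑ i ∈ Finset.Icc 1 n,
        ((i.factorial * stirling2 n i * 2 ^ (n - i) : ℕ) : ℝ) *
          (-1 : ℝ) ^ ((i : ℤ) - (n : ℤ) + (k : ℤ)) *
          ((if 2 * k ≤ n then ((i.choose (n - 2 * k) : ℕ) : ℝ) else 0) -
            ((i.choose (n + 1 - 2 * k) : ℕ) : ℝ)) := by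
  classical
  have hk2 : 2 * k ≤ n + 1 := by omega
  have key := congrArg (fun p => p.coeff (n + 1 - 2 * k)) (PExplicitAux.P_eq n hn)
  simp only [Polynomial.coeff_map, Polynomial.finset_sum_coeff, Polynomial.coeff_C_mul] at key
  have hins : Finset.range (n + 1) = insert 0 (Finset.Icc 1 n) := by
    ext x; simp; omega
  rw [hins, Finset.sum_insert (by simp)] at key
  have h0 : PExplicitAux.cc n 0 * (PExplicitAux.Bp 0).coeff (n + 1 - 2 * k) = 0 := by
    simp [PExplicitAux.cc, PExplicitAux.stirling2_zero n hn]
  rw [h0, zero_add] at key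
  have key2 : ((P n).coeff (n + 1 - 2 * k) : ℂ) =
      ∑ m ∈ Finset.Icc 1 n, PExplicitAux.cc n m * (PExplicitAux.Bp m).coeff (n + 1 - 2 * k) := by
    simpa using key
  apply Complex.ofReal_injective
  rw [key2, Finset.sum_congr rfl (fun m _ => PExplicitAux.term_eq n k m hk2)]
  push_cast
  apply Finset.sum_congr rfl
  intro m _
  split_ifs <;> push_cast <;> ring
end
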